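/- arXiv:1304.5999 — 4 statements merged into one kernel-verified Lean document; each statement's English description precedes it below -/
import Mathlib

section
/- Let $\sigma$ be a weight on $\mathbb{R}^n$ and define the dyadic logarithmic maximal function $M_0\sigma(x)=\sup_{Q\ni x,\,Q\in\mathscr{D}}\exp\big(\frac{1}{|Q|}\int_Q\log\sigma\big)$. Then $\|M_0\sigma\|_{L^1(\mathbb{R}^n)}\le e\,\|\sigma\|_{L^1(\mathbb{R}^n)}$ for every $\sigma\in L^1(\mathbb{R}^n)$. -/
open MeasureTheory ENNReal

noncomputable section

/-- Points of `ℝⁿ`. -/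
abbrev Rn (n : ℕ) := Fin n → ℝ

/-- The half-open cube with corner `c` and sidelength `h`. -/
def cube {n : ℕ} (c : Rn n) (h : ℝ) : Set (Rn n) :=
  Set.univ.pi fun i => Set.Ico (c i) (c i + h)

/-- `Q` is a (half-open, axis-parallel) cube. -/
def IsCube {n : ℕ} (Q : Set (Rn n)) : Prop := ∃ c h, 0 < h ∧ Q = cube c h

/-- The dyadic cube `2^{-k}([0,1)^n + j)` of the standard dyadic grid. -/
def dyadicCube {n : ℕ} (k : ℤ) (j : Fin n → ℤ) : Set (Rn n) :=
  cube (fun i => (j i : ℝ) * (2:ℝ) ^ (-k)) ((2:ℝ) ^ (-k))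

/-- `Q` belongs to the standard dyadic grid `𝒟`. -/
def IsDyadicCube {n : ℕ} (Q : Set (Rn n)) : Prop := ∃ k j, Q = dyadicCube k j

/-- `∫_Q g` of a (nonnegative) real function, as an element of `ℝ≥0∞`. -/
def setInt {n : ℕ} (Q : Set (Rn n)) (g : Rn n → ℝ) : ℝ≥0∞ :=
  ∫⁻ x in Q, ENNReal.ofReal (g x)

/-- The average `(1/|Q|)∫_Q g`. -/
def avg {n : ℕ} (Q : Set (Rn n)) (g : Rn n → ℝ) : ℝ≥0∞ := setInt Q g / volume Q

/-- The weighted average `(1/σ(Q)) ∫_Q f σ`. -/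
def wAvg {n : ℕ} (Q : Set (Rn n)) (σ f : Rn n → ℝ) : ℝ≥0∞ :=
  setInt Q (fun x => f x * σ x) / setInt Q σ

/-- The dyadic weighted multisublinear maximal operator `𝓜^d_{⃗σ}`. -/
def Mdw {n m : ℕ} (σ f : Fin m → Rn n → ℝ) (x : Rn n) : ℝ≥0∞ :=
  ⨆ (Q : Set (Rn n)) (_ : IsDyadicCube Q) (_ : x ∈ Q), ∏ i, wAvg Q (σ i) (f i)

/-- The dyadic weighted maximal operator `M^d_σ`. -/
def Mdw1 {n : ℕ} (σ f : Rn n → ℝ) (x : Rn n) : ℝ≥0∞ :=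
  ⨆ (Q : Set (Rn n)) (_ : IsDyadicCube Q) (_ : x ∈ Q), wAvg Q σ f

/-- The multisublinear maximal operator `𝓜` over all cubes. -/
def MM {n m : ℕ} (f : Fin m → Rn n → ℝ) (x : Rn n) : ℝ≥0∞ :=
  ⨆ (Q : Set (Rn n)) (_ : IsCube Q) (_ : x ∈ Q), ∏ i, avg Q (f i)

/-- The dyadic multisublinear maximal operator `𝓜^d`. -/
def MMd {n m : ℕ} (f : Fin m → Rn n → ℝ) (x : Rn n) : ℝ≥0∞ :=
  ⨆ (Q : Set (Rn n)) (_ : IsDyadicCube Q) (_ : x ∈ Q), ∏ i, avg Q (f i)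

/-- The Hardy–Littlewood maximal operator (over all cubes). -/
def HLM {n : ℕ} (g : Rn n → ℝ) (x : Rn n) : ℝ≥0∞ :=
  ⨆ (Q : Set (Rn n)) (_ : IsCube Q) (_ : x ∈ Q), avg Q g

/-- `(∫ g^p v dx)^{1/p}` for an `ℝ≥0∞`-valued `g`. -/
def nLp {n : ℕ} (p : ℝ) (v : Rn n → ℝ) (g : Rn n → ℝ≥0∞) : ℝ≥0∞ :=
  (∫⁻ x, g x ^ p * ENNReal.ofReal (v x)) ^ (1/p)

/-- The `L^p(v)` norm of a (nonnegative) real function. -/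
def nLpR {n : ℕ} (p : ℝ) (v f : Rn n → ℝ) : ℝ≥0∞ :=
  nLp p v (fun x => ENNReal.ofReal (f x))

/-- The conjugate exponent `q' = q/(q-1)`. -/
def conjExp (q : ℝ) : ℝ := q / (q - 1)

/-- The dual weights `σ_i = w_i^{1-p_i'}`. -/
def dualW {n m : ℕ} (p : Fin m → ℝ) (w : Fin m → Rn n → ℝ) : Fin m → Rn n → ℝ :=
  fun i x => w i x ^ (1 - conjExp (p i))

/-- The geometric average `exp((1/|Q|)∫_Q log g)`, realized (in the extended sense)
as `inf_{r>0} ((1/|Q|)∫_Q g^r)^{1/r}`. -/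
def expLogAvg {n : ℕ} (Q : Set (Rn n)) (g : Rn n → ℝ) : ℝ≥0∞ :=
  ⨅ (r : ℝ) (_ : 0 < r), ((∫⁻ x in Q, ENNReal.ofReal (g x) ^ r) / volume Q) ^ (1/r)

/-- A sparse family of cubes indexed by `ℤ × J`. -/
def IsSparse {n : ℕ} (J : Type) (Q : ℤ → J → Set (Rn n)) : Prop :=
  (∀ (k : ℤ) (j j' : J), j ≠ j' → Q k j ∩ Q k j' = ∅) ∧
  (∀ k : ℤ, (⋃ j, Q (k+1) j) ⊆ ⋃ j, Q k j) ∧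
  (∀ (k : ℤ) (j : J), volume ((⋃ j', Q (k+1) j') ∩ Q k j) ≤ volume (Q k j) / 2)

/-- A general dyadic grid. -/
def IsDyadicGrid {n : ℕ} (G : Set (Set (Rn n))) : Prop :=
  (∀ Q ∈ G, ∃ (k : ℤ) (c : Rn n), Q = cube c ((2:ℝ) ^ k)) ∧
  (∀ Q ∈ G, ∀ R ∈ G, Q ∩ R = Q ∨ Q ∩ R = R ∨ Q ∩ R = ∅) ∧
  (∀ k : ℤ,
    ⋃₀ {Q | Q ∈ G ∧ ∃ c, Q = cube c ((2:ℝ) ^ k)} = Set.univ ∧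
    {Q | Q ∈ G ∧ ∃ c, Q = cube c ((2:ℝ) ^ k)}.Pairwise fun Q R => Q ∩ R = ∅)
namespace S10
variable {n : ℕ}

lemma floor_congr_div {a b : ℝ} {c : ℤ} (hc : 0 < c) (h : ⌊a⌋ = ⌊b⌋) : ⌊a / (c:ℝ)⌋ = ⌊b / (c:ℝ)⌋ := by
  have hc' : (0:ℝ) < (c:ℝ) := by exact_mod_cast hc
  have key : ∀ u v : ℝ, ⌊u⌋ = ⌊v⌋ → ⌊u / (c:ℝ)⌋ ≤ ⌊v / (c:ℝ)⌋ := by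
    intro u v huv
    set q := ⌊u / (c:ℝ)⌋
    have h1 : (q : ℝ) * c ≤ u := by
      have := Int.floor_le (u / (c:ℝ))
      calc (q:ℝ) * c ≤ (u / c) * c := by nlinarith
        _ = u := by field_simp
    have h2 : q * c ≤ ⌊v⌋ := by
      rw [← huv]
      exact_mod_cast Int.le_floor.2 (by exact_mod_cast h1)
    have h3 : (q : ℝ) * c ≤ v := le_trans (by exact_mod_cast h2) (Int.floor_le v)
    exact Int.le_floor.2 (by rw [le_div_iff₀ hc']; exact_mod_cast h3)
  exact le_antisymm (key a b h) (key b a h.symm)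

lemma mem_dyadicCube {k : ℤ} {j : Fin n → ℤ} {x : Rn n} :
    x ∈ dyadicCube k j ↔ ∀ i, ⌊x i * (2:ℝ) ^ k⌋ = j i := by
  have h2 : (0:ℝ) < (2:ℝ) ^ (-k) := zpow_pos (by norm_num) _
  constructor
  · intro hx i
    have hi := Set.mem_univ_pi.1 hx i
    simp only [Set.mem_Ico] at hi
    rw [Int.floor_eq_iff]
    constructor
    · calc ((j i : ℝ)) = (j i) * (2:ℝ)^(-k) * (2:ℝ)^k := by
            rw [mul_assoc, ← zpow_add₀ (by norm_num : (2:ℝ) ≠ 0)]; simp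
        _ ≤ x i * (2:ℝ)^k := by
            apply mul_le_mul_of_nonneg_right hi.1 (le_of_lt (zpow_pos (by norm_num) _))
    · calc x i * (2:ℝ)^k < ((j i : ℝ) * (2:ℝ)^(-k) + (2:ℝ)^(-k)) * (2:ℝ)^k := by
            apply mul_lt_mul_of_pos_right hi.2 (zpow_pos (by norm_num) _)
        _ = (j i) + 1 := by
            rw [add_mul, mul_assoc, ← zpow_add₀ (by norm_num : (2:ℝ) ≠ 0)]
            norm_num
  · intro hf
    rw [dyadicCube, cube, Set.mem_univ_pi]
    intro i
    have hi := hf i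
    rw [Int.floor_eq_iff] at hi
    have h2k : (0:ℝ) < (2:ℝ) ^ k := zpow_pos (by norm_num) _
    simp only [Set.mem_Ico]
    constructor
    · have := hi.1
      calc (j i : ℝ) * (2:ℝ)^(-k) ≤ (x i * (2:ℝ)^k) * (2:ℝ)^(-k) := by
            apply mul_le_mul_of_nonneg_right this (le_of_lt h2)
        _ = x i := by
            rw [mul_assoc, ← zpow_add₀ (by norm_num : (2:ℝ) ≠ 0)]; simp
    · have := hi.2
      calc x i = (x i * (2:ℝ)^k) * (2:ℝ)^(-k) := by
            rw [mul_assoc, ← zpow_add₀ (by norm_num : (2:ℝ) ≠ 0)]; simp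
        _ < ((j i : ℝ) + 1) * (2:ℝ)^(-k) := by
            apply mul_lt_mul_of_pos_right this h2
        _ = (j i : ℝ) * (2:ℝ)^(-k) + (2:ℝ)^(-k) := by ring

/-- index of the dyadic cube of generation `k` containing `x` -/
def jfl (k : ℤ) (x : Rn n) : Fin n → ℤ := fun i => ⌊x i * (2:ℝ) ^ k⌋

lemma mem_cb (k : ℤ) (x : Rn n) : x ∈ dyadicCube k (jfl k x) := mem_dyadicCube.2 fun _ => rfl

lemma eq_jfl_of_mem {k : ℤ} {j : Fin n → ℤ} {x : Rn n} (h : x ∈ dyadicCube k j) : j = jfl k x :=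
  funext fun i => ((mem_dyadicCube.1 h) i).symm

lemma jfl_congr {k k' : ℤ} (hk : k ≤ k') {x y : Rn n} (h : jfl k' x = jfl k' y) :
    jfl k x = jfl k y := by
  funext i
  have hc : (0:ℤ) < 2 ^ (k' - k).toNat := pow_pos (by norm_num) _
  have hcast : ((2 ^ (k' - k).toNat : ℤ) : ℝ) = (2:ℝ) ^ (k' - k) := by
    push_cast
    rw [← zpow_natCast]
    congr 1
    omega
  have key : ∀ z : ℝ, z * (2:ℝ) ^ k = (z * (2:ℝ) ^ k') / ((2 ^ (k' - k).toNat : ℤ) : ℝ) := by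
    intro z
    rw [hcast]
    rw [show z * (2:ℝ) ^ k' = z * (2:ℝ) ^ k * (2:ℝ) ^ (k' - k) by
      rw [mul_assoc, ← zpow_add₀ (by norm_num : (2:ℝ) ≠ 0)]; congr 2; omega]
    rw [mul_div_assoc, div_self (by positivity), mul_one]
  have hx := key (x i); have hy := key (y i)
  simp only [jfl] at h ⊢
  rw [hx, hy]
  exact floor_congr_div hc (congrFun h i)

lemma nested {k k' : ℤ} (hk : k ≤ k') (x : Rn n) :
    dyadicCube k' (jfl k' x) ⊆ dyadicCube k (jfl k x) := by
  intro y hy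
  have : jfl k' y = jfl k' x := (eq_jfl_of_mem hy).symm
  have := jfl_congr hk this
  rw [← this]
  exact mem_cb k y

lemma measurableSet_dyadicCube {k : ℤ} {j : Fin n → ℤ} : MeasurableSet (dyadicCube k j) :=
  MeasurableSet.univ_pi fun _ => measurableSet_Ico

lemma volume_dyadicCube (k : ℤ) (j : Fin n → ℤ) :
    volume (dyadicCube k j) = ENNReal.ofReal ((2:ℝ) ^ (-k)) ^ n := by
  rw [dyadicCube, cube, volume_pi_pi]
  simp [Real.volume_Ico]

lemma volume_dyadicCube_ne_zero (k : ℤ) (j : Fin n → ℤ) : volume (dyadicCube k j) ≠ 0 := by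
  rw [volume_dyadicCube]
  exact pow_ne_zero _ (by simp [ENNReal.ofReal_eq_zero, not_le]; positivity)

lemma volume_dyadicCube_ne_top (k : ℤ) (j : Fin n → ℤ) : volume (dyadicCube k j) ≠ ∞ :=
  by rw [volume_dyadicCube]; exact pow_ne_top ofReal_ne_top


/-! ### The dyadic maximal operator -/

def mdA (g : Rn n → ℝ≥0∞) (k : ℤ) (j : Fin n → ℤ) : ℝ≥0∞ :=
  (∫⁻ y in dyadicCube k j, g y) / volume (dyadicCube k j)

def Md (g : Rn n → ℝ≥0∞) (x : Rn n) : ℝ≥0∞ :=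
  ⨆ (k : ℤ) (j : Fin n → ℤ), Set.indicator (dyadicCube k j) (fun _ => mdA g k j) x

lemma measurable_Md (g : Rn n → ℝ≥0∞) : Measurable (Md g) :=
  Measurable.iSup fun _ => Measurable.iSup fun _ =>
    Measurable.indicator measurable_const measurableSet_dyadicCube

lemma mdA_le_Md {g : Rn n → ℝ≥0∞} {k : ℤ} {j : Fin n → ℤ} {x : Rn n}
    (hx : x ∈ dyadicCube k j) : mdA g k j ≤ Md g x := by
  have h : Set.indicator (dyadicCube k j) (fun _ => mdA g k j) x = mdA g k j :=
    Set.indicator_of_mem hx _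
  rw [← h]
  exact le_iSup₂ (f := fun k j => Set.indicator (dyadicCube k j) (fun _ => mdA g k j) x) k j

lemma exists_heavy {g : Rn n → ℝ≥0∞} {s : ℝ≥0∞} {x : Rn n} (h : s < Md g x) :
    ∃ k, x ∈ dyadicCube k (jfl k x) ∧ s < mdA g k (jfl k x) := by
  rw [Md, lt_iSup_iff] at h
  obtain ⟨k, hk⟩ := h
  rw [lt_iSup_iff] at hk
  obtain ⟨j, hj⟩ := hk
  by_cases hm : x ∈ dyadicCube k j
  · rw [Set.indicator_of_mem hm] at hj
    have hje := eq_jfl_of_mem hm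
    subst hje
    exact ⟨k, hm, hj⟩
  · rw [Set.indicator_of_notMem hm] at hj
    simp at hj

/-! ### Integral of `q t^(q-1)` -/

lemma lint_Ioo (q : ℝ) (hq : 0 < q) {b : ℝ} (hb : 0 ≤ b) :
    ∫⁻ t in Set.Ioo (0:ℝ) b, ENNReal.ofReal (q * t ^ (q-1)) = ENNReal.ofReal (b ^ q) := by
  have hint : IntervalIntegrable (fun t : ℝ => q * t ^ (q-1)) volume 0 b :=
    (intervalIntegral.intervalIntegrable_rpow' (by linarith)).const_mul q
  have hreal : ∫ t in (0:ℝ)..b, q * t ^ (q-1) = b ^ q := by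
    rw [intervalIntegral.integral_const_mul, integral_rpow (Or.inl (by linarith))]
    rw [sub_add_cancel, Real.zero_rpow hq.ne']
    field_simp
    simp
  have h1 : ∫⁻ t in Set.Ioo (0:ℝ) b, ENNReal.ofReal (q * t ^ (q-1)) =
      ∫⁻ t in Set.Ioc (0:ℝ) b, ENNReal.ofReal (q * t ^ (q-1)) := by
    exact setLIntegral_congr Ioo_ae_eq_Ioc
  rw [h1, ← hreal, intervalIntegral.integral_of_le hb,
    ← ofReal_integral_eq_lintegral_ofReal]
  · exact (intervalIntegrable_iff_integrableOn_Ioc_of_le hb).1 hint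
  · filter_upwards [ae_restrict_mem measurableSet_Ioc] with t ht
    have : (0:ℝ) < t := ht.1
    positivity

lemma measurable_lev {m : Type*} [MeasurableSpace m] {F : m → ℝ≥0∞} (hF : Measurable F)
    (t : ℝ) : MeasurableSet {x : m | ENNReal.ofReal t < F x} :=
  measurableSet_lt measurable_const hF

lemma lint_rpow (q : ℝ) (hq : 0 < q) (a : ℝ≥0∞) :
    ∫⁻ t in Set.Ioi (0:ℝ),
      ENNReal.ofReal (q * t ^ (q-1)) * Set.indicator {t : ℝ | ENNReal.ofReal t < a}
        (fun _ => (1:ℝ≥0∞)) t = a ^ q := by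
  have hS : MeasurableSet {t : ℝ | ENNReal.ofReal t < a} :=
    measurableSet_lt ENNReal.measurable_ofReal measurable_const
  have hind : ∀ t, ENNReal.ofReal (q * t ^ (q-1)) * Set.indicator {t : ℝ | ENNReal.ofReal t < a}
      (fun _ => (1:ℝ≥0∞)) t =
      Set.indicator {t : ℝ | ENNReal.ofReal t < a} (fun t => ENNReal.ofReal (q * t ^ (q-1))) t := by
    intro t
    by_cases h : t ∈ {t : ℝ | ENNReal.ofReal t < a} <;> simp [h]
  rw [lintegral_congr hind, lintegral_indicator hS, Measure.restrict_restrict hS]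
  by_cases ha : a = ∞
  · subst ha
    have huniv : {t : ℝ | ENNReal.ofReal t < ∞} = Set.univ := by
      ext t; simp [ofReal_lt_top]
    rw [huniv, Set.univ_inter, top_rpow_of_pos hq]
    apply ENNReal.eq_top_of_forall_nnreal_le
    intro r
    set cc : ℝ := (r : ℝ) ^ (1/q) with hcc
    have hcc0 : 0 ≤ cc := Real.rpow_nonneg r.2 _
    set N : ℕ := ⌈cc⌉₊
    have hcN : cc ≤ (N : ℝ) := Nat.le_ceil cc
    have hrN : (r : ℝ) ≤ (N : ℝ) ^ q := by
      calc (r : ℝ) = (cc) ^ q := by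
            rw [hcc, ← Real.rpow_mul r.coe_nonneg, one_div_mul_cancel hq.ne', Real.rpow_one]
        _ ≤ (N : ℝ) ^ q := Real.rpow_le_rpow hcc0 hcN hq.le
    calc (r : ℝ≥0∞) = ENNReal.ofReal (r : ℝ) := (ofReal_coe_nnreal).symm
      _ ≤ ENNReal.ofReal ((N : ℝ) ^ q) := ofReal_le_ofReal hrN
      _ = ∫⁻ t in Set.Ioo (0:ℝ) N, ENNReal.ofReal (q * t ^ (q-1)) :=
          (lint_Ioo q hq (Nat.cast_nonneg N)).symm
      _ ≤ _ := lintegral_mono_set Set.Ioo_subset_Ioi_self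
  · have hb : (0:ℝ) ≤ a.toReal := toReal_nonneg
    have hset : {t : ℝ | ENNReal.ofReal t < a} ∩ Set.Ioi 0 = Set.Ioo 0 a.toReal := by
      ext t
      simp only [Set.mem_inter_iff, Set.mem_setOf_eq, Set.mem_Ioi, Set.mem_Ioo]
      constructor
      · rintro ⟨h1, h2⟩
        exact ⟨h2, (ENNReal.ofReal_lt_iff_lt_toReal h2.le ha).1 h1⟩
      · rintro ⟨h1, h2⟩
        exact ⟨(ENNReal.ofReal_lt_iff_lt_toReal h1.le ha).2 h2, h1⟩
    rw [hset, lint_Ioo q hq hb, ← ENNReal.ofReal_toReal ha,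
      ENNReal.ofReal_rpow_of_nonneg hb hq.le, ENNReal.ofReal_toReal ha]


/-! ### Tonelli swap -/

lemma master {m : Type*} [MeasurableSpace m] (μ : Measure m) [SigmaFinite μ]
    (c : ℝ → ℝ≥0∞) (hc : Measurable c) (h F : m → ℝ≥0∞) (hh : Measurable h)
    (hF : Measurable F) :
    ∫⁻ t in Set.Ioi (0:ℝ), c t * (∫⁻ x, Set.indicator {x | ENNReal.ofReal t < F x} h x ∂μ) =
    ∫⁻ x, h x * (∫⁻ t in Set.Ioi (0:ℝ),
      c t * Set.indicator {t : ℝ | ENNReal.ofReal t < F x} (fun _ => (1:ℝ≥0∞)) t) ∂μ := by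
  have hA : MeasurableSet {p : ℝ × m | ENNReal.ofReal p.1 < F p.2} :=
    measurableSet_lt (ENNReal.measurable_ofReal.comp measurable_fst) (hF.comp measurable_snd)
  set G : ℝ → m → ℝ≥0∞ := fun t x =>
    c t * (h x * Set.indicator {p : ℝ × m | ENNReal.ofReal p.1 < F p.2}
      (fun _ => (1:ℝ≥0∞)) (t, x)) with hG
  have hGm : Measurable (Function.uncurry G) := by
    apply Measurable.mul
    · exact hc.comp measurable_fst
    · exact (hh.comp measurable_snd).mul (measurable_const.indicator hA)
  have key := lintegral_lintegral_swap (μ := volume.restrict (Set.Ioi (0:ℝ))) (ν := μ)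
    hGm.aemeasurable
  calc ∫⁻ t in Set.Ioi (0:ℝ), c t * (∫⁻ x, Set.indicator {x | ENNReal.ofReal t < F x} h x ∂μ)
      = ∫⁻ t in Set.Ioi (0:ℝ), ∫⁻ x, G t x ∂μ := by
        apply lintegral_congr
        intro t
        rw [hG]
        simp only
        rw [← lintegral_const_mul _ (hh.indicator (measurable_lev hF t))]
        apply lintegral_congr
        intro x
        by_cases hx : ENNReal.ofReal t < F x
        · have h1 : x ∈ {x : m | ENNReal.ofReal t < F x} := hx
          have h2 : (t, x) ∈ {p : ℝ × m | ENNReal.ofReal p.1 < F p.2} := hx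
          rw [Set.indicator_of_mem h1, Set.indicator_of_mem h2]
          ring
        · have h1 : x ∉ {x : m | ENNReal.ofReal t < F x} := hx
          have h2 : (t, x) ∉ {p : ℝ × m | ENNReal.ofReal p.1 < F p.2} := hx
          rw [Set.indicator_of_notMem h1, Set.indicator_of_notMem h2]
          ring
    _ = ∫⁻ x, (∫⁻ t in Set.Ioi (0:ℝ), G t x) ∂μ := key
    _ = _ := by
        apply lintegral_congr
        intro x
        rw [hG]
        simp only
        rw [← lintegral_const_mul _ (by
          exact hc.mul (measurable_const.indicator (measurable_prodMk_right hA)))]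
        apply lintegral_congr
        intro t
        by_cases hx : ENNReal.ofReal t < F x
        · have h1 : t ∈ {t : ℝ | ENNReal.ofReal t < F x} := hx
          have h2 : (t, x) ∈ {p : ℝ × m | ENNReal.ofReal p.1 < F p.2} := hx
          rw [Set.indicator_of_mem h1, Set.indicator_of_mem h2]
          ring
        · have h1 : t ∉ {t : ℝ | ENNReal.ofReal t < F x} := hx
          have h2 : (t, x) ∉ {p : ℝ × m | ENNReal.ofReal p.1 < F p.2} := hx
          rw [Set.indicator_of_notMem h1, Set.indicator_of_notMem h2]
          ring

lemma layercake {m : Type*} [MeasurableSpace m] (μ : Measure m) [SigmaFinite μ]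
    (F : m → ℝ≥0∞) (hF : Measurable F) (p : ℝ) (hp : 0 < p) :
    ∫⁻ x, F x ^ p ∂μ =
      ∫⁻ t in Set.Ioi (0:ℝ), ENNReal.ofReal (p * t ^ (p-1)) * μ {x | ENNReal.ofReal t < F x} := by
  have := master μ (fun t => ENNReal.ofReal (p * t ^ (p-1)))
    (by
      apply ENNReal.measurable_ofReal.comp
      apply Measurable.const_mul
      exact measurable_id.pow measurable_const)
    (fun _ => 1) F measurable_const hF
  rw [show (∫⁻ x, F x ^ p ∂μ) = ∫⁻ x, (fun _ => (1:ℝ≥0∞)) x * (∫⁻ t in Set.Ioi (0:ℝ),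
      ENNReal.ofReal (p * t ^ (p-1)) *
      Set.indicator {t : ℝ | ENNReal.ofReal t < F x} (fun _ => (1:ℝ≥0∞)) t) ∂μ from ?_, ← this]
  · apply lintegral_congr
    intro t
    congr 1
    exact lintegral_indicator_one (measurable_lev hF t)
  · apply lintegral_congr
    intro x
    rw [one_mul, lint_rpow p hp (F x)]


/-! ### Weak type (1,1) bound -/

def heavy (g : Rn n → ℝ≥0∞) (s : ℝ≥0∞) (k : ℤ) (j : Fin n → ℤ) : Prop := s < mdA g k j

def ptc (q : ℤ × (Fin n → ℤ)) : Rn n := fun i => ((q.2 i : ℝ)) * (2:ℝ) ^ (-q.1)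

lemma ptc_mem (q : ℤ × (Fin n → ℤ)) : ptc q ∈ dyadicCube q.1 q.2 := by
  rw [dyadicCube, cube, Set.mem_univ_pi]
  intro i
  rw [Set.mem_Ico]
  have h2 : (0:ℝ) < (2:ℝ) ^ (-q.1) := zpow_pos (by norm_num) _
  exact ⟨le_refl _, by simp only [ptc]; linarith⟩

lemma jfl_const {k k' : ℤ} (hk' : k' ≤ k) {j : Fin n → ℤ} {z w : Rn n}
    (hz : z ∈ dyadicCube k j) (hw : w ∈ dyadicCube k j) : jfl k' z = jfl k' w := by
  have h1 : jfl k z = jfl k w := by rw [← eq_jfl_of_mem hz, ← eq_jfl_of_mem hw]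
  exact jfl_congr hk' h1

/-- The set of maximal heavy cubes. -/
def maxHeavy (g : Rn n → ℝ≥0∞) (s : ℝ≥0∞) : Set (ℤ × (Fin n → ℤ)) :=
  {q | heavy g s q.1 q.2 ∧ ∀ k' < q.1, ¬ heavy g s k' (jfl k' (ptc q))}

lemma maxHeavy_disjoint (g : Rn n → ℝ≥0∞) (s : ℝ≥0∞) :
    (maxHeavy g s).Pairwise (Function.onFun Disjoint (fun q => dyadicCube q.1 q.2)) := by
  have aux : ∀ q ∈ maxHeavy g s, ∀ q' ∈ maxHeavy g s, q.1 < q'.1 →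
      ∀ z, z ∈ dyadicCube q.1 q.2 → z ∈ dyadicCube q'.1 q'.2 → False := by
    intro q hq q' hq' hlt z hz hz'
    have h1 : jfl q.1 (ptc q') = jfl q.1 z := jfl_const hlt.le (ptc_mem q') hz'
    have h2 : q.2 = jfl q.1 z := eq_jfl_of_mem hz
    have h3 := hq'.2 q.1 hlt
    rw [h1, ← h2] at h3
    exact h3 hq.1
  intro q hq q' hq' hne
  rw [Function.onFun, Set.disjoint_left]
  intro z hz hz'
  rcases lt_trichotomy q.1 q'.1 with h | h | h
  · exact aux q hq q' hq' h z hz hz'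
  · apply hne
    have h2 : q.2 = jfl q.1 z := eq_jfl_of_mem hz
    have h2' : q'.2 = jfl q'.1 z := eq_jfl_of_mem hz'
    exact Prod.ext h (by rw [h2, h2', h])
  · exact aux q' hq' q hq h z hz' hz

lemma heavy_cube_subset (g : Rn n → ℝ≥0∞) (s : ℝ≥0∞) (k : ℤ) (j : Fin n → ℤ)
    (hh : heavy g s k j) : dyadicCube k j ⊆ {x | s < Md g x} :=
  fun _ hy => lt_of_lt_of_le hh (mdA_le_Md hy)

lemma heavy_vol_bound (g : Rn n → ℝ≥0∞) {s : ℝ≥0∞} (hs0 : s ≠ 0) (hstop : s ≠ ∞)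
    (k : ℤ) (j : Fin n → ℤ) (hh : heavy g s k j) :
    volume (dyadicCube k j) ≤ s⁻¹ * ∫⁻ y in dyadicCube k j, g y := by
  have h1 : s * volume (dyadicCube k j) ≤ ∫⁻ y in dyadicCube k j, g y :=
    ENNReal.mul_le_of_le_div (le_of_lt hh)
  calc volume (dyadicCube k j) = s⁻¹ * (s * volume (dyadicCube k j)) := by
        rw [← mul_assoc, ENNReal.inv_mul_cancel hs0 hstop, one_mul]
    _ ≤ s⁻¹ * ∫⁻ y in dyadicCube k j, g y := mul_le_mul_right h1 _

lemma maxHeavy_cover (hn : 0 < n) (g : Rn n → ℝ≥0∞) {s : ℝ≥0∞} (hs0 : s ≠ 0) (hstop : s ≠ ∞)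
    (hB : (∫⁻ x in {x | s < Md g x}, g x) ≠ ∞) :
    {x | s < Md g x} ⊆ ⋃ q ∈ maxHeavy g s, dyadicCube q.1 q.2 := by
  have hfin : s⁻¹ * (∫⁻ x in {x | s < Md g x}, g x) ≠ ∞ :=
    ENNReal.mul_ne_top (ENNReal.inv_ne_top.2 hs0) hB
  obtain ⟨N, hN⟩ := ENNReal.exists_nat_gt hfin.lt_top.ne
  have h_bound : ∀ k j, heavy g s k j →
      volume (dyadicCube k j) ≤ s⁻¹ * ∫⁻ x in {x | s < Md g x}, g x := by
    intro k j hh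
    refine le_trans (heavy_vol_bound g hs0 hstop k j hh) (mul_le_mul_right ?_ _)
    exact lintegral_mono_set (heavy_cube_subset g s k j hh)
  have hk₀ : ∀ k j, heavy g s k j → -(N:ℤ) < k := by
    intro k j hh
    by_contra hcon
    push_neg at hcon
    have hNk : (N:ℤ) ≤ -k := by omega
    have h2r : (N:ℝ) ≤ (2:ℝ) ^ (-k) := by
      calc (N:ℝ) ≤ ((2^N : ℕ) : ℝ) := by exact_mod_cast (Nat.lt_two_pow_self (n := N)).le
        _ = (2:ℝ) ^ ((N:ℤ)) := by exact_mod_cast (zpow_natCast (2:ℝ) N).symm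
        _ ≤ (2:ℝ) ^ (-k) := by apply zpow_le_zpow_right₀ (by norm_num) hNk
    have h1le : (1:ℝ≥0∞) ≤ ENNReal.ofReal ((2:ℝ) ^ (-k)) := by
      rw [show (1:ℝ≥0∞) = ENNReal.ofReal 1 by simp]
      apply ofReal_le_ofReal
      apply one_le_zpow₀ (by norm_num : (1:ℝ) ≤ 2)
      omega
    have hNle : (N:ℝ≥0∞) ≤ volume (dyadicCube k j) := by
      rw [volume_dyadicCube]
      calc (N:ℝ≥0∞) = ENNReal.ofReal (N:ℝ) := by simp [ENNReal.ofReal_natCast]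
        _ ≤ ENNReal.ofReal ((2:ℝ) ^ (-k)) := ofReal_le_ofReal h2r
        _ ≤ ENNReal.ofReal ((2:ℝ) ^ (-k)) ^ n := le_self_pow₀ h1le hn.ne'
    exact lt_irrefl _ (lt_of_le_of_lt (hNle.trans (h_bound k j hh)) hN)
  intro x hx
  obtain ⟨k1, hmem1, hheavy1⟩ := exists_heavy hx
  haveI := Classical.decPred (fun k : ℤ => heavy g s k (jfl k x))
  obtain ⟨km, hkm, hkmin⟩ := Int.exists_least_of_bdd
    (P := fun k : ℤ => heavy g s k (jfl k x))
    ⟨-(N:ℤ), fun z hz => (hk₀ z _ hz).le⟩ ⟨k1, hheavy1⟩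
  have hqS : ((km, jfl km x) : ℤ × (Fin n → ℤ)) ∈ maxHeavy g s := by
    constructor
    · exact hkm
    · intro k' hk' hcon
      have hjj : jfl k' (ptc (km, jfl km x)) = jfl k' x :=
        jfl_const hk'.le (ptc_mem ((km, jfl km x) : ℤ × (Fin n → ℤ))) (mem_cb km x)
      rw [hjj] at hcon
      have := hkmin k' hcon
      omega
  exact Set.mem_biUnion hqS (mem_cb km x)

lemma weak (hn : 0 < n) (g : Rn n → ℝ≥0∞) {s : ℝ≥0∞} (hs0 : s ≠ 0) (hstop : s ≠ ∞) :
    volume {x | s < Md g x} ≤ s⁻¹ * ∫⁻ x in {x | s < Md g x}, g x := by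
  by_cases hB : (∫⁻ x in {x | s < Md g x}, g x) = ∞
  · rw [hB, ENNReal.mul_top (ENNReal.inv_ne_zero.2 hstop)]
    exact le_top
  have cover := maxHeavy_cover hn g hs0 hstop hB
  have disj := maxHeavy_disjoint g s
  have subE : (⋃ q ∈ maxHeavy g s, dyadicCube q.1 q.2) ⊆ {x | s < Md g x} := by
    intro x hx
    obtain ⟨q, hq, hxq⟩ := Set.mem_iUnion₂.1 hx
    exact heavy_cube_subset g s q.1 q.2 hq.1 hxq
  have hcount : (maxHeavy g s).Countable := Set.to_countable _
  haveI : Countable ↥(maxHeavy g s) := hcount.to_subtype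
  have hpd : Pairwise (Function.onFun Disjoint
      (fun q : ↥(maxHeavy g s) => dyadicCube (q : ℤ × (Fin n → ℤ)).1 (q : ℤ × (Fin n → ℤ)).2)) :=
    fun i j hij => disj i.property j.property (fun h => hij (Subtype.ext h))
  calc volume {x | s < Md g x} ≤ volume (⋃ q ∈ maxHeavy g s, dyadicCube q.1 q.2) :=
        measure_mono cover
    _ = ∑' q : ↥(maxHeavy g s), volume (dyadicCube (q : ℤ × (Fin n → ℤ)).1
          (q : ℤ × (Fin n → ℤ)).2) :=
        measure_biUnion hcount disj (fun q _ => measurableSet_dyadicCube)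
    _ ≤ ∑' q : ↥(maxHeavy g s), s⁻¹ * ∫⁻ y in dyadicCube (q : ℤ × (Fin n → ℤ)).1
          (q : ℤ × (Fin n → ℤ)).2, g y :=
        ENNReal.tsum_le_tsum (fun q => heavy_vol_bound g hs0 hstop _ _ q.property.1)
    _ = s⁻¹ * ∑' q : ↥(maxHeavy g s), ∫⁻ y in dyadicCube (q : ℤ × (Fin n → ℤ)).1
          (q : ℤ × (Fin n → ℤ)).2, g y := ENNReal.tsum_mul_left
    _ = s⁻¹ * ∫⁻ y in ⋃ q : ↥(maxHeavy g s), dyadicCube (q : ℤ × (Fin n → ℤ)).1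
          (q : ℤ × (Fin n → ℤ)).2, g y := by
        congr 1
        exact (lintegral_iUnion (fun q : ↥(maxHeavy g s) => measurableSet_dyadicCube) hpd g).symm
    _ ≤ s⁻¹ * ∫⁻ x in {x | s < Md g x}, g x := by
        apply mul_le_mul_right
        apply lintegral_mono_set
        apply Set.iUnion_subset
        intro q
        exact (Set.subset_biUnion_of_mem q.property).trans subE


/-! ### Lp bounds -/

lemma Md_le_add (g h : Rn n → ℝ≥0∞) (hh : Measurable h) (L : ℝ≥0∞)
    (hgt : ∀ y, g y ≤ h y + L) (x : Rn n) : Md g x ≤ Md h x + L := by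
  apply iSup₂_le
  intro k j
  by_cases hm : x ∈ dyadicCube k j
  · rw [Set.indicator_of_mem hm]
    have hv0 := volume_dyadicCube_ne_zero k j
    have hvt := volume_dyadicCube_ne_top k j
    have h2 : (∫⁻ y in dyadicCube k j, g y) ≤
        (∫⁻ y in dyadicCube k j, h y) + L * volume (dyadicCube k j) := by
      calc (∫⁻ y in dyadicCube k j, g y) ≤ ∫⁻ y in dyadicCube k j, (h y + L) :=
            lintegral_mono hgt
        _ = (∫⁻ y in dyadicCube k j, h y) + L * volume (dyadicCube k j) := by
            rw [lintegral_add_right _ measurable_const, setLIntegral_const]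
    have h1 : mdA g k j ≤ mdA h k j + L := by
      rw [mdA, mdA]
      calc (∫⁻ y in dyadicCube k j, g y) / volume (dyadicCube k j) ≤
          ((∫⁻ y in dyadicCube k j, h y) + L * volume (dyadicCube k j)) /
            volume (dyadicCube k j) := ENNReal.div_le_div_right h2 _
        _ = (∫⁻ y in dyadicCube k j, h y) / volume (dyadicCube k j) +
            L * volume (dyadicCube k j) / volume (dyadicCube k j) := ENNReal.add_div
        _ = (∫⁻ y in dyadicCube k j, h y) / volume (dyadicCube k j) + L := by
            rw [mul_div_assoc, ENNReal.div_self hv0 hvt, mul_one]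
    exact h1.trans (add_le_add_left (mdA_le_Md hm) L)
  · rw [Set.indicator_of_notMem hm]
    exact zero_le

lemma ofReal_two_mul_half (t : ℝ) (ht : 0 < t) :
    ENNReal.ofReal t = 2 * ENNReal.ofReal (t/2) := by
  rw [show t = 2*(t/2) by ring, ENNReal.ofReal_mul (by norm_num : (0:ℝ) ≤ 2)]
  norm_num

lemma crude (hn : 0 < n) (g : Rn n → ℝ≥0∞) (hg : Measurable g) {p : ℝ} (hp : 1 < p) :
    ∫⁻ x, (Md g x) ^ p ≤
      ENNReal.ofReal (2*p/(p-1)) * ((2:ℝ≥0∞)^(p-1) * ∫⁻ x, (g x) ^ p) := by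
  have hp0 : (0:ℝ) < p := lt_trans one_pos hp
  have hp1 : (0:ℝ) < p - 1 := by linarith
  have hF2 : Measurable (fun x => 2 * g x) := measurable_const.mul hg
  set gt : ℝ → Rn n → ℝ≥0∞ :=
    fun t y => Set.indicator {y | ENNReal.ofReal t < 2 * g y} g y with hgtdef
  have hgtm : ∀ t, Measurable (gt t) := fun t => hg.indicator (measurable_lev hF2 t)
  have key : ∀ t ∈ Set.Ioi (0:ℝ),
      ENNReal.ofReal (p * t^(p-1)) * volume {x | ENNReal.ofReal t < Md g x} ≤
      ENNReal.ofReal (2*p/(p-1)) *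
        (ENNReal.ofReal ((p-1) * t^((p-1)-1)) *
          ∫⁻ x, Set.indicator {x | ENNReal.ofReal t < 2 * g x} g x) := by
    intro t ht
    rw [Set.mem_Ioi] at ht
    set L := ENNReal.ofReal (t/2) with hLdef
    have hL0 : L ≠ 0 := by
      rw [hLdef]
      simp [ENNReal.ofReal_eq_zero, not_le]
      linarith
    have hLt : L ≠ ∞ := ofReal_ne_top
    have h2L : ENNReal.ofReal t = 2 * L := ofReal_two_mul_half t ht
    have hptw : ∀ y, g y ≤ gt t y + L := by
      intro y
      by_cases hy : y ∈ {y : Rn n | ENNReal.ofReal t < 2 * g y}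
      · have : gt t y = g y := Set.indicator_of_mem hy _
        rw [this]
        exact le_self_add
      · have h0 : gt t y = 0 := Set.indicator_of_notMem hy _
        rw [h0, zero_add]
        rw [Set.mem_setOf_eq, not_lt] at hy
        rw [h2L] at hy
        exact (ENNReal.mul_le_mul_iff_right (by norm_num) (by norm_num)).1 hy
    have hsub : {x | ENNReal.ofReal t < Md g x} ⊆ {x | L < Md (gt t) x} := by
      intro x hx
      by_contra hcon
      rw [Set.mem_setOf_eq, not_lt] at hcon
      have h3 : Md g x ≤ Md (gt t) x + L := Md_le_add g (gt t) (hgtm t) L hptw x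
      have h4 : Md g x ≤ ENNReal.ofReal t := by
        rw [h2L, two_mul]
        exact h3.trans (add_le_add_left hcon L)
      exact absurd hx (not_lt.2 h4)
    have hw : volume {x | ENNReal.ofReal t < Md g x} ≤
        L⁻¹ * ∫⁻ x, gt t x := by
      calc volume {x | ENNReal.ofReal t < Md g x} ≤ volume {x | L < Md (gt t) x} :=
            measure_mono hsub
        _ ≤ L⁻¹ * ∫⁻ x in {x | L < Md (gt t) x}, gt t x := weak hn (gt t) hL0 hLt
        _ ≤ L⁻¹ * ∫⁻ x, gt t x := mul_le_mul_right (setLIntegral_le_lintegral _ _) _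
    have hrw : ENNReal.ofReal (p * t^(p-1)) * L⁻¹ =
        ENNReal.ofReal (2*p/(p-1)) * ENNReal.ofReal ((p-1) * t^((p-1)-1)) := by
      rw [hLdef, ← div_eq_mul_inv, ← ENNReal.ofReal_div_of_pos (by linarith),
        ← ENNReal.ofReal_mul (by positivity)]
      congr 1
      have h1 : t^(p-1) = t^(p-2) * t := by
        rw [show p-1 = (p-2)+1 by ring, Real.rpow_add_one (ne_of_gt ht)]
      rw [show (p-1)-1 = p-2 by ring, h1]
      field_simp
    calc ENNReal.ofReal (p * t^(p-1)) * volume {x | ENNReal.ofReal t < Md g x}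
        ≤ ENNReal.ofReal (p * t^(p-1)) * (L⁻¹ * ∫⁻ x, gt t x) := mul_le_mul_right hw _
      _ = (ENNReal.ofReal (p * t^(p-1)) * L⁻¹) * ∫⁻ x, gt t x := by rw [mul_assoc]
      _ = ENNReal.ofReal (2*p/(p-1)) *
            (ENNReal.ofReal ((p-1) * t^((p-1)-1)) * ∫⁻ x, gt t x) := by
          rw [hrw, mul_assoc]
  calc ∫⁻ x, (Md g x) ^ p
      = ∫⁻ t in Set.Ioi (0:ℝ), ENNReal.ofReal (p * t^(p-1)) *
          volume {x | ENNReal.ofReal t < Md g x} :=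
        layercake volume (Md g) (measurable_Md g) p hp0
    _ ≤ ∫⁻ t in Set.Ioi (0:ℝ), ENNReal.ofReal (2*p/(p-1)) *
          (ENNReal.ofReal ((p-1) * t^((p-1)-1)) *
            ∫⁻ x, Set.indicator {x | ENNReal.ofReal t < 2 * g x} g x) :=
        setLIntegral_mono' measurableSet_Ioi key
    _ = ENNReal.ofReal (2*p/(p-1)) * ∫⁻ t in Set.Ioi (0:ℝ),
          ENNReal.ofReal ((p-1) * t^((p-1)-1)) *
            ∫⁻ x, Set.indicator {x | ENNReal.ofReal t < 2 * g x} g x :=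
        lintegral_const_mul' _ _ ofReal_ne_top
    _ = ENNReal.ofReal (2*p/(p-1)) * ∫⁻ x, g x * ((2 * g x) ^ (p-1)) := by
        congr 1
        rw [master volume (fun t => ENNReal.ofReal ((p-1) * t^((p-1)-1)))
          (by apply ENNReal.measurable_ofReal.comp
              exact (measurable_id.pow measurable_const).const_mul _)
          g (fun x => 2 * g x) hg hF2]
        apply lintegral_congr
        intro x
        rw [lint_rpow (p-1) hp1 (2 * g x)]
    _ ≤ ENNReal.ofReal (2*p/(p-1)) * ((2:ℝ≥0∞)^(p-1) * ∫⁻ x, (g x) ^ p) := by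
        apply mul_le_mul_right
        have hpt : ∀ x : Rn n, g x * ((2 * g x) ^ (p-1)) = (2:ℝ≥0∞)^(p-1) * (g x) ^ p := by
          intro x
          rw [ENNReal.mul_rpow_of_nonneg _ _ hp1.le]
          rw [show (g x) ^ p = (g x) ^ (1 + (p-1)) by norm_num,
            ENNReal.rpow_add_of_nonneg 1 (p-1) zero_le_one hp1.le, ENNReal.rpow_one]
          ring
        rw [lintegral_congr hpt]
        rw [lintegral_const_mul' _ _ (by
          exact (ENNReal.rpow_lt_top_of_nonneg hp1.le (by norm_num)).ne)]


set_option maxHeartbeats 600000 in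
lemma sharp (hn : 0 < n) (g : Rn n → ℝ≥0∞) (hg : Measurable g) {p : ℝ} (hp : 1 < p) :
    ∫⁻ x, (Md g x) ^ p ≤ ENNReal.ofReal ((p/(p-1))^p) * ∫⁻ x, (g x) ^ p := by
  have hp0 : (0:ℝ) < p := lt_trans one_pos hp
  have hp1 : (0:ℝ) < p - 1 := by linarith
  set I := ∫⁻ x, (g x) ^ p with hI
  by_cases hItop : I = ∞
  · rw [hItop, ENNReal.mul_top (by

      simp [ENNReal.ofReal_eq_zero, not_le]
      positivity)]
    exact le_top
  set A := ∫⁻ x, (Md g x) ^ p with hA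
  have hAtop : A ≠ ∞ := by
    intro hcon
    have := crude hn g hg hp
    rw [← hA, ← hI, hcon] at this
    have hfin : ENNReal.ofReal (2*p/(p-1)) * ((2:ℝ≥0∞)^(p-1) * I) ≠ ∞ := by
      apply ENNReal.mul_ne_top ofReal_ne_top
      exact ENNReal.mul_ne_top (ENNReal.rpow_lt_top_of_nonneg hp1.le (by norm_num)).ne hItop
    exact hfin (top_le_iff.1 this)
  by_cases hA0 : A = 0
  · rw [hA0]
    exact zero_le
  -- the main estimate
  have main : A ≤ ENNReal.ofReal (p/(p-1)) * (I ^ (1/p) * A ^ (1/(p/(p-1)))) := by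
    have key : ∀ t ∈ Set.Ioi (0:ℝ),
        ENNReal.ofReal (p * t^(p-1)) * volume {x | ENNReal.ofReal t < Md g x} ≤
        ENNReal.ofReal (p/(p-1)) *
          (ENNReal.ofReal ((p-1) * t^((p-1)-1)) *
            ∫⁻ x, Set.indicator {x | ENNReal.ofReal t < Md g x} g x) := by
      intro t ht
      rw [Set.mem_Ioi] at ht
      have hs0 : ENNReal.ofReal t ≠ 0 := by
        simp [ENNReal.ofReal_eq_zero, not_le]; linarith
      have hw : volume {x | ENNReal.ofReal t < Md g x} ≤
          (ENNReal.ofReal t)⁻¹ * ∫⁻ x, Set.indicator {x | ENNReal.ofReal t < Md g x} g x := by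
        rw [lintegral_indicator (measurable_lev (measurable_Md g) t)]
        exact weak hn g hs0 ofReal_ne_top
      have hrw : ENNReal.ofReal (p * t^(p-1)) * (ENNReal.ofReal t)⁻¹ =
          ENNReal.ofReal (p/(p-1)) * ENNReal.ofReal ((p-1) * t^((p-1)-1)) := by
        rw [← div_eq_mul_inv, ← ENNReal.ofReal_div_of_pos ht,
          ← ENNReal.ofReal_mul (by positivity)]
        congr 1
        have h1 : t^(p-1) = t^(p-2) * t := by
          rw [show p-1 = (p-2)+1 by ring, Real.rpow_add_one (ne_of_gt ht)]
        rw [show (p-1)-1 = p-2 by ring, h1]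
        field_simp
      calc ENNReal.ofReal (p * t^(p-1)) * volume {x | ENNReal.ofReal t < Md g x}
          ≤ ENNReal.ofReal (p * t^(p-1)) * ((ENNReal.ofReal t)⁻¹ *
              ∫⁻ x, Set.indicator {x | ENNReal.ofReal t < Md g x} g x) :=
            mul_le_mul_right hw _
        _ = (ENNReal.ofReal (p * t^(p-1)) * (ENNReal.ofReal t)⁻¹) *
              ∫⁻ x, Set.indicator {x | ENNReal.ofReal t < Md g x} g x := by rw [mul_assoc]
        _ = _ := by rw [hrw, mul_assoc]
    have hconj : p.HolderConjugate (p/(p-1)) := Real.HolderConjugate.conjExponent hp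
    have hstep : A ≤ ENNReal.ofReal (p/(p-1)) * ∫⁻ x, g x * (Md g x) ^ (p-1) := by
      calc A = ∫⁻ t in Set.Ioi (0:ℝ), ENNReal.ofReal (p * t^(p-1)) *
            volume {x | ENNReal.ofReal t < Md g x} :=
          layercake volume (Md g) (measurable_Md g) p hp0
        _ ≤ ∫⁻ t in Set.Ioi (0:ℝ), ENNReal.ofReal (p/(p-1)) *
            (ENNReal.ofReal ((p-1) * t^((p-1)-1)) *
              ∫⁻ x, Set.indicator {x | ENNReal.ofReal t < Md g x} g x) :=
          setLIntegral_mono' measurableSet_Ioi key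
        _ = ENNReal.ofReal (p/(p-1)) * ∫⁻ t in Set.Ioi (0:ℝ),
            ENNReal.ofReal ((p-1) * t^((p-1)-1)) *
              ∫⁻ x, Set.indicator {x | ENNReal.ofReal t < Md g x} g x :=
          lintegral_const_mul' _ _ ofReal_ne_top
        _ = ENNReal.ofReal (p/(p-1)) * ∫⁻ x, g x * (Md g x) ^ (p-1) := by
          congr 1
          rw [master volume (fun t => ENNReal.ofReal ((p-1) * t^((p-1)-1)))
            (by apply ENNReal.measurable_ofReal.comp
                exact (measurable_id.pow measurable_const).const_mul _)
            g (Md g) hg (measurable_Md g)]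
          apply lintegral_congr
          intro x
          rw [lint_rpow (p-1) hp1 (Md g x)]
    refine hstep.trans (mul_le_mul_right ?_ _)
    have hHolder := ENNReal.lintegral_mul_le_Lp_mul_Lq volume hconj hg.aemeasurable
      (((measurable_Md g).pow measurable_const).aemeasurable :
        AEMeasurable (fun x => (Md g x) ^ (p-1)) volume)
    refine hHolder.trans ?_
    apply mul_le_mul_right
    have : ∀ x : Rn n, ((Md g x) ^ (p-1)) ^ (p/(p-1)) = (Md g x) ^ p := by
      intro x
      rw [← ENNReal.rpow_mul]
      congr 1
      field_simp
    rw [lintegral_congr this]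
  -- conclude by dividing
  set c := ENNReal.ofReal (p/(p-1)) with hc
  set q := p/(p-1) with hq
  have hq0 : (0:ℝ) < 1/q := by positivity
  have hAq0 : A ^ (1/q) ≠ 0 := by
    intro h
    rw [ENNReal.rpow_eq_zero_iff] at h
    rcases h with ⟨h1, _⟩ | ⟨h1, _⟩
    · exact hA0 h1
    · exact hAtop h1
  have hAqt : A ^ (1/q) ≠ ∞ :=
    (ENNReal.rpow_lt_top_of_nonneg hq0.le hAtop).ne
  have hsplit : A = A ^ (1/p) * A ^ (1/q) := by
    rw [← ENNReal.rpow_add _ _ hA0 hAtop,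
      show 1/p + 1/q = 1 by rw [hq]; field_simp; ring]
    exact (ENNReal.rpow_one A).symm
  have hdiv : A ^ (1/p) ≤ c * I ^ (1/p) := by
    have h1 : A ^ (1/p) * A ^ (1/q) ≤ (c * I ^ (1/p)) * A ^ (1/q) := by
      rw [← hsplit]
      calc A ≤ c * (I ^ (1/p) * A ^ (1/q)) := main
        _ = (c * I ^ (1/p)) * A ^ (1/q) := by rw [mul_assoc]
    exact (ENNReal.mul_le_mul_iff_left hAq0 hAqt).1 h1
  calc A = (A ^ (1/p)) ^ p := by
        rw [← ENNReal.rpow_mul, one_div_mul_cancel hp0.ne', ENNReal.rpow_one]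
    _ ≤ (c * I ^ (1/p)) ^ p := ENNReal.rpow_le_rpow hdiv hp0.le
    _ = c ^ p * (I ^ (1/p)) ^ p := ENNReal.mul_rpow_of_nonneg _ _ hp0.le
    _ = ENNReal.ofReal ((p/(p-1))^p) * I := by
        rw [← ENNReal.rpow_mul, one_div_mul_cancel hp0.ne', ENNReal.rpow_one, hc,
          ENNReal.ofReal_rpow_of_nonneg (by positivity) hp0.le]


/-! ### The limit `(p/(p-1))^p → e` -/

open Filter Topology in
lemma tendsto_c : Tendsto (fun p : ℝ => (p/(p-1))^p) atTop (𝓝 (Real.exp 1)) := by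
  have h1 : Tendsto (fun q : ℝ => (1 + 1/q)^q) atTop (𝓝 (Real.exp 1)) := by
    simpa using Real.tendsto_one_add_div_rpow_exp 1
  have h2 : Tendsto (fun q : ℝ => 1 + 1/q) atTop (𝓝 1) := by
    have h := tendsto_const_nhds (α := ℝ) (x := (1:ℝ)) (f := atTop) |>.add
      (tendsto_inv_atTop_zero (𝕜 := ℝ))
    simpa [one_div] using h
  have h3 : Tendsto (fun q : ℝ => (1 + 1/q)^q * (1 + 1/q)) atTop (𝓝 (Real.exp 1)) := by
    have := h1.mul h2
    simpa using this
  have hshift : Tendsto (fun p : ℝ => p - 1) atTop atTop :=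
    tendsto_atTop_add_const_right atTop (-1) tendsto_id
  have h4 : Tendsto (fun p : ℝ => (1 + 1/(p-1))^(p-1) * (1 + 1/(p-1))) atTop
      (𝓝 (Real.exp 1)) := h3.comp hshift
  apply h4.congr'
  filter_upwards [eventually_gt_atTop (1:ℝ)] with p hp
  have hp1 : (0:ℝ) < p - 1 := by linarith
  have heq : 1 + 1/(p-1) = p/(p-1) := by field_simp; ring
  rw [heq, ← Real.rpow_add_one (by positivity : p/(p-1) ≠ 0) (p-1), sub_add_cancel]

end S10

/-- `L¹` boundedness of the dyadic logarithmic maximal operator: `‖M₀σ‖₁ ≤ e‖σ‖₁`. -/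
theorem stmt10 {n : ℕ} (σ : Rn n → ℝ) (hσ0 : ∀ x, 0 ≤ σ x) (hσm : Measurable σ)
    (hσ1 : Integrable σ volume) :
    (∫⁻ x, ⨆ (Q : Set (Rn n)) (_ : IsDyadicCube Q) (_ : x ∈ Q), expLogAvg Q σ) ≤
      ENNReal.ofReal (Real.exp 1) * ∫⁻ x, ENNReal.ofReal (σ x) := by
  rcases Nat.eq_zero_or_pos n with hn0 | hn
  · subst hn0
    have hvol : volume (Set.univ : Set (Rn 0)) = 1 := by
      have h := volume_pi_pi (fun _ : Fin 0 => (Set.univ : Set ℝ))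
      simp only [Finset.univ_eq_empty, Finset.prod_empty] at h
      rwa [Set.pi_univ] at h
    have hQuniv : ∀ (k : ℤ) (j : Fin 0 → ℤ), dyadicCube k j = Set.univ := by
      intro k j
      ext x
      simp only [dyadicCube, cube, Set.mem_univ_pi, Set.mem_univ, iff_true]
      exact fun i => i.elim0
    have hbound : ∀ x : Rn 0,
        (⨆ (Q : Set (Rn 0)) (_ : IsDyadicCube Q) (_ : x ∈ Q), expLogAvg Q σ) ≤
        ∫⁻ y, ENNReal.ofReal (σ y) := by
      intro x
      refine iSup_le fun Q => iSup_le fun hQ => iSup_le fun hx => ?_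
      obtain ⟨k, j, rfl⟩ := hQ
      rw [hQuniv k j]
      calc expLogAvg Set.univ σ
          ≤ ((∫⁻ y in Set.univ, ENNReal.ofReal (σ y) ^ (1:ℝ)) /
              volume (Set.univ : Set (Rn 0))) ^ (1/(1:ℝ)) := iInf₂_le 1 one_pos
        _ = ∫⁻ y, ENNReal.ofReal (σ y) := by
            rw [hvol]
            simp [ENNReal.rpow_one]
    calc (∫⁻ x, ⨆ (Q : Set (Rn 0)) (_ : IsDyadicCube Q) (_ : x ∈ Q), expLogAvg Q σ)
        ≤ ∫⁻ _x : Rn 0, ∫⁻ y, ENNReal.ofReal (σ y) := lintegral_mono hbound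
      _ = (∫⁻ y, ENNReal.ofReal (σ y)) * volume (Set.univ : Set (Rn 0)) := lintegral_const _
      _ = ∫⁻ y, ENNReal.ofReal (σ y) := by rw [hvol, mul_one]
      _ ≤ ENNReal.ofReal (Real.exp 1) * ∫⁻ y, ENNReal.ofReal (σ y) := by
          nth_rewrite 1 [← one_mul (∫⁻ y, ENNReal.ofReal (σ y))]
          apply mul_le_mul_left
          rw [show (1:ℝ≥0∞) = ENNReal.ofReal 1 by simp]
          apply ofReal_le_ofReal
          have := Real.add_one_le_exp (1:ℝ)
          linarith
  · by_cases hC : (∫⁻ x, ENNReal.ofReal (σ x)) = ∞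
    · rw [hC, ENNReal.mul_top (by
        simp only [ne_eq, ENNReal.ofReal_eq_zero, not_le]
        exact Real.exp_pos 1)]
      exact le_top
    have hbound : ∀ p : ℝ, 1 < p →
        (∫⁻ x, ⨆ (Q : Set (Rn n)) (_ : IsDyadicCube Q) (_ : x ∈ Q), expLogAvg Q σ) ≤
        ENNReal.ofReal ((p/(p-1))^p) * ∫⁻ x, ENNReal.ofReal (σ x) := by
      intro p hp
      have hp0 : (0:ℝ) < p := lt_trans one_pos hp
      set g : Rn n → ℝ≥0∞ := fun x => (ENNReal.ofReal (σ x)) ^ (1/p) with hgdef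
      have hg : Measurable g := (ENNReal.measurable_ofReal.comp hσm).pow measurable_const
      have hgp : ∀ x, (g x) ^ p = ENNReal.ofReal (σ x) := by
        intro x
        rw [hgdef]
        simp only
        rw [← ENNReal.rpow_mul, one_div_mul_cancel hp0.ne', ENNReal.rpow_one]
      have hdom : ∀ x, (⨆ (Q : Set (Rn n)) (_ : IsDyadicCube Q) (_ : x ∈ Q), expLogAvg Q σ) ≤
          (S10.Md g x) ^ p := by
        intro x
        refine iSup_le fun Q => iSup_le fun hQ => iSup_le fun hx => ?_
        obtain ⟨k, j, rfl⟩ := hQ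
        have h1 : expLogAvg (dyadicCube k j) σ ≤
            ((∫⁻ y in dyadicCube k j, ENNReal.ofReal (σ y) ^ (1/p)) /
              volume (dyadicCube k j)) ^ (1/(1/p)) :=
          iInf₂_le (1/p) (by positivity)
        rw [one_div_one_div] at h1
        refine h1.trans ?_
        have h2 : (∫⁻ y in dyadicCube k j, ENNReal.ofReal (σ y) ^ (1/p)) /
            volume (dyadicCube k j) = S10.mdA g k j := rfl
        rw [h2]
        exact ENNReal.rpow_le_rpow (S10.mdA_le_Md hx) hp0.le
      calc (∫⁻ x, ⨆ (Q : Set (Rn n)) (_ : IsDyadicCube Q) (_ : x ∈ Q), expLogAvg Q σ)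
          ≤ ∫⁻ x, (S10.Md g x) ^ p := lintegral_mono hdom
        _ ≤ ENNReal.ofReal ((p/(p-1))^p) * ∫⁻ x, (g x) ^ p := S10.sharp hn g hg hp
        _ = ENNReal.ofReal ((p/(p-1))^p) * ∫⁻ x, ENNReal.ofReal (σ x) := by
            rw [lintegral_congr hgp]
    have hlim : Filter.Tendsto
        (fun p : ℝ => ENNReal.ofReal ((p/(p-1))^p) * ∫⁻ x, ENNReal.ofReal (σ x))
        Filter.atTop (nhds (ENNReal.ofReal (Real.exp 1) * ∫⁻ x, ENNReal.ofReal (σ x))) := by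
      apply ENNReal.Tendsto.mul_const
      · exact (ENNReal.continuous_ofReal.tendsto _).comp S10.tendsto_c
      · exact Or.inr hC
    exact ge_of_tendsto hlim ((Filter.eventually_gt_atTop (1:ℝ)).mono fun p hp => hbound p hp)
end
end

section
/- There exist $2^n$ dyadic grids $\mathscr{D}_\alpha$ in $\mathbb{R}^n$ such that for every cube $Q\subset\mathbb{R}^n$ there exist $\alpha$ and a cube $Q_\alpha\in\mathscr{D}_\alpha$ with $Q\subset Q_\alpha$ and $\ell_{Q_\alpha}\le 6\ell_Q$. -/
open MeasureTheory ENNReal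

noncomputable section

namespace Stmt12Aux

/-- shift of the grid with parameter `b` at scale `k`. -/
def sft (b : Bool) (k : ℤ) : ℝ := if b then (-1:ℝ)^k * (2:ℝ)^k / 3 else 0

def cell (b : Bool) (k j : ℤ) : Set ℝ :=
  Set.Ico ((j:ℝ) * 2^k + sft b k) (((j:ℝ)+1) * 2^k + sft b k)

lemma two_zpow_pos (k : ℤ) : (0:ℝ) < 2^k := zpow_pos (by norm_num) k

lemma sft_succ (b : Bool) (k : ℤ) : ∃ m : ℤ, sft b k - sft b (k+1) = (m:ℝ) * 2^k := by
  cases b with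
  | false => exact ⟨0, by simp [sft]⟩
  | true =>
    have hs : ∀ k' : ℤ, sft true k' = (-1:ℝ)^k' * (2:ℝ)^k' / 3 := fun _ => rfl
    rcases Int.even_or_odd k with he | ho
    · refine ⟨1, ?_⟩
      rw [hs, hs, zpow_add_one₀ (by norm_num : ((-1:ℝ)) ≠ 0),
        zpow_add_one₀ (by norm_num : ((2:ℝ)) ≠ 0), he.neg_one_zpow]
      push_cast
      ring
    · refine ⟨-1, ?_⟩
      rw [hs, hs, zpow_add_one₀ (by norm_num : ((-1:ℝ)) ≠ 0),
        zpow_add_one₀ (by norm_num : ((2:ℝ)) ≠ 0), ho.neg_one_zpow]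
      push_cast
      ring

lemma sft_diff_nat (b : Bool) (k : ℤ) (d : ℕ) :
    ∃ m : ℤ, sft b k - sft b (k + d) = (m:ℝ) * 2^k := by
  induction d with
  | zero => exact ⟨0, by simp⟩
  | succ d ih =>
    obtain ⟨m, hm⟩ := ih
    obtain ⟨m', hm'⟩ := sft_succ b (k + d)
    refine ⟨m + m' * 2^d, ?_⟩
    have h2 : (2:ℝ)^(k + (d:ℤ)) = 2^(d:ℕ) * 2^k := by
      rw [zpow_add₀ (by norm_num : (2:ℝ) ≠ 0), ← zpow_natCast (2:ℝ)]
      ring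
    have he : sft b k - sft b (k + (d+1:ℕ)) =
        (sft b k - sft b (k + d)) + (sft b (k + d) - sft b (k + d + 1)) := by
      push_cast
      ring_nf
    rw [he, hm, hm', h2]
    push_cast
    ring

lemma sft_diff (b : Bool) {k l : ℤ} (hkl : k ≤ l) :
    ∃ m : ℤ, sft b k - sft b l = (m:ℝ) * 2^k := by
  obtain ⟨m, hm⟩ := sft_diff_nat b k (l - k).toNat
  refine ⟨m, ?_⟩
  rwa [Int.toNat_of_nonneg (by omega), add_sub_cancel] at hm

lemma Ico_dyadic_nest {k l : ℤ} (hkl : k ≤ l) (J j' : ℤ) (s : ℝ) :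
    Set.Ico ((J:ℝ)*2^k + s) (((J:ℝ)+1)*2^k + s) ⊆
      Set.Ico ((j':ℝ)*2^l + s) (((j':ℝ)+1)*2^l + s) ∨
    Set.Ico ((J:ℝ)*2^k + s) (((J:ℝ)+1)*2^k + s) ∩
      Set.Ico ((j':ℝ)*2^l + s) (((j':ℝ)+1)*2^l + s) = ∅ := by
  set d : ℕ := (l-k).toNat with hd
  have h2 : (2:ℝ)^l = (2^d : ℤ) * 2^k := by
    push_cast
    rw [← zpow_natCast (2:ℝ), hd, Int.toNat_of_nonneg (by omega), ← zpow_add₀ (by norm_num : (2:ℝ) ≠ 0)]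
    ring_nf
  have hek := two_zpow_pos k
  by_cases h1 : j' * 2^d ≤ J ∧ J + 1 ≤ (j'+1) * 2^d
  · left
    apply Set.Ico_subset_Ico
    · have : ((j' * 2^d : ℤ):ℝ) ≤ (J:ℝ) := by exact_mod_cast h1.1
      rw [h2]; push_cast at this ⊢; nlinarith
    · have : ((J:ℝ)+1) ≤ ((j'+1) * 2^d : ℤ) := by exact_mod_cast h1.2
      rw [h2]; push_cast at this ⊢; nlinarith
  · right
    rw [Set.eq_empty_iff_forall_notMem]
    rintro x ⟨⟨hx1, hx2⟩, hx3, hx4⟩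
    rw [not_and_or] at h1
    rcases h1 with h1 | h1
    · push_neg at h1
      have h1' : J + 1 ≤ j' * 2^d := by omega
      have hc : ((J:ℝ)+1) ≤ ((j' * 2^d : ℤ):ℝ) := by exact_mod_cast h1'
      rw [h2] at hx3
      push_cast at hc hx3
      nlinarith
    · push_neg at h1
      have h1' : (j'+1) * 2^d ≤ J := by omega
      have hc : (((j'+1) * 2^d : ℤ):ℝ) ≤ (J:ℝ) := by exact_mod_cast h1'
      rw [h2] at hx4
      push_cast at hc hx4
      nlinarith

lemma cell_eq_Ico (b : Bool) (k j : ℤ) (m : ℤ) (s : ℝ) (hs : sft b k = s + (m:ℝ) * 2^k) :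
    cell b k j = Set.Ico (((j+m : ℤ):ℝ)*2^k + s) ((((j+m:ℤ):ℝ)+1)*2^k + s) := by
  unfold cell
  rw [hs]
  congr 1 <;> push_cast <;> ring

lemma cell_nest (b : Bool) {k l : ℤ} (hkl : k ≤ l) (j j' : ℤ) :
    cell b k j ⊆ cell b l j' ∨ cell b k j ∩ cell b l j' = ∅ := by
  obtain ⟨m, hm⟩ := sft_diff b hkl
  have hs : sft b k = sft b l + (m:ℝ) * 2^k := by linarith
  rw [cell_eq_Ico b k j m (sft b l) hs]
  have hc : cell b l j' = Set.Ico ((j':ℝ)*2^l + sft b l) (((j':ℝ)+1)*2^l + sft b l) := rfl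
  rw [hc]
  exact Ico_dyadic_nest hkl (j+m) j' (sft b l)

lemma cell_disj (b : Bool) (k : ℤ) {j j' : ℤ} (hjj : j ≠ j') :
    cell b k j ∩ cell b k j' = ∅ := by
  have hek := two_zpow_pos k
  rw [Set.eq_empty_iff_forall_notMem]
  rintro x ⟨⟨hx1, hx2⟩, hx3, hx4⟩
  rcases lt_or_gt_of_ne hjj with h | h
  · have hc : (j:ℝ) + 1 ≤ (j':ℝ) := by exact_mod_cast h
    nlinarith
  · have hc : (j':ℝ) + 1 ≤ (j:ℝ) := by exact_mod_cast h
    nlinarith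

lemma cell_cover (b : Bool) (k : ℤ) (x : ℝ) : ∃ j : ℤ, x ∈ cell b k j := by
  have hek := two_zpow_pos k
  refine ⟨⌊(x - sft b k)/2^k⌋, ?_⟩
  constructor
  · have := Int.floor_le ((x - sft b k)/2^k)
    rw [le_div_iff₀ hek] at this
    linarith
  · have := Int.lt_floor_add_one ((x - sft b k)/2^k)
    rw [div_lt_iff₀ hek] at this
    push_cast
    linarith


/-! ### n-dimensional grids -/

section Dim
variable {n : ℕ}

def gcube (α : Fin n → Bool) (k : ℤ) (j : Fin n → ℤ) : Set (Rn n) :=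
  Set.univ.pi fun i => cell (α i) k (j i)

lemma gcube_eq (α : Fin n → Bool) (k : ℤ) (j : Fin n → ℤ) :
    gcube α k j = cube (fun i => (j i : ℝ) * 2^k + sft (α i) k) ((2:ℝ)^k) := by
  unfold gcube cube cell
  apply congrArg
  funext i
  have he : ((j i:ℝ)+1) * 2^k + sft (α i) k = ((j i:ℝ) * 2^k + sft (α i) k) + 2^k := by ring
  rw [he]

def Grid (α : Fin n → Bool) : Set (Set (Rn n)) := {Q | ∃ k j, Q = gcube α k j}

lemma cube_nonempty (c : Rn n) {h : ℝ} (hh : 0 < h) : (cube c h).Nonempty :=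
  ⟨c, fun i _ => ⟨le_rfl, by linarith⟩⟩

lemma cube_inj {c c' : Rn n} {h h' : ℝ} (hh : 0 < h) (hh' : 0 < h')
    (i : Fin n) (he : cube c h = cube c' h') : c i = c' i ∧ h = h' := by
  have h1 : Function.eval i '' cube c h = Set.Ico (c i) (c i + h) :=
    Set.eval_image_univ_pi (cube_nonempty c hh)
  have h2 : Function.eval i '' cube c' h' = Set.Ico (c' i) (c' i + h') :=
    Set.eval_image_univ_pi (cube_nonempty c' hh')
  rw [he, h2] at h1
  rw [Set.Ico_eq_Ico_iff (Or.inr (by linarith))] at h1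
  exact ⟨h1.1.symm, by linarith [h1.1, h1.2]⟩

lemma gcube_disj_of {α : Fin n → Bool} {k l : ℤ} {j j' : Fin n → ℤ} (i : Fin n)
    (h : cell (α i) k (j i) ∩ cell (α i) l (j' i) = ∅) :
    gcube α k j ∩ gcube α l j' = ∅ := by
  rw [Set.eq_empty_iff_forall_notMem]
  rintro x ⟨hx1, hx2⟩
  have : x i ∈ cell (α i) k (j i) ∩ cell (α i) l (j' i) :=
    ⟨hx1 i trivial, hx2 i trivial⟩
  rw [h] at this
  exact this

lemma gcube_nest (α : Fin n → Bool) {k l : ℤ} (hkl : k ≤ l) (j j' : Fin n → ℤ) :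
    gcube α k j ∩ gcube α l j' = gcube α k j ∨ gcube α k j ∩ gcube α l j' = ∅ := by
  by_cases hall : ∀ i, cell (α i) k (j i) ⊆ cell (α i) l (j' i)
  · left
    rw [Set.inter_eq_left]
    intro x hx i _
    exact hall i (hx i trivial)
  · right
    push_neg at hall
    obtain ⟨i, hi⟩ := hall
    rcases cell_nest (α i) hkl (j i) (j' i) with hsub | hdisj
    · exact absurd hsub hi
    · exact gcube_disj_of i hdisj

end Dim

/-! ### the 1D fitting lemma -/

lemma cell_fit {k : ℤ} {h : ℝ} (hh : 0 < h) (h3 : 3*h ≤ (2:ℝ)^k) (a : ℝ) :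
    ∃ (b : Bool) (j : ℤ), Set.Ico a (a+h) ⊆ cell b k j := by
  have hek := two_zpow_pos k
  set j0 := ⌊a/(2:ℝ)^k⌋ with hj0
  have ha0 : a < ((j0:ℝ)+1) * 2^k := by
    have := Int.lt_floor_add_one (a/(2:ℝ)^k)
    rw [div_lt_iff₀ hek] at this
    push_cast at this ⊢
    linarith
  by_cases hc : a + h ≤ ((j0:ℝ)+1) * 2^k
  · refine ⟨false, j0, ?_⟩
    have hfl : (j0:ℝ) * 2^k ≤ a := by
      have := Int.floor_le (a/(2:ℝ)^k)
      rw [le_div_iff₀ hek] at this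
      linarith
    have hsf : sft false k = 0 := rfl
    unfold cell
    rw [hsf]
    exact Set.Ico_subset_Ico (by linarith) (by linarith)
  · push_neg at hc
    set s := sft true k with hs
    have hone : |(-1:ℝ)^k| = 1 := by
      rcases Int.even_or_odd k with he | ho
      · rw [he.neg_one_zpow]; norm_num
      · rw [ho.neg_one_zpow]; norm_num
    have hsab : |s| = 2^k/3 := by
      rw [hs]
      show |(-1:ℝ)^k * 2^k/3| = 2^k/3
      rw [abs_div, abs_mul, hone, abs_of_pos hek]
      norm_num
    set j1 := ⌊(a - s)/(2:ℝ)^k⌋ with hj1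
    refine ⟨true, j1, ?_⟩
    have hfl : (j1:ℝ) * 2^k + s ≤ a := by
      have := Int.floor_le ((a-s)/(2:ℝ)^k)
      rw [le_div_iff₀ hek] at this
      linarith
    have hlt1 : a < ((j1:ℝ)+1) * 2^k + s := by
      have := Int.lt_floor_add_one ((a-s)/(2:ℝ)^k)
      rw [div_lt_iff₀ hek] at this
      push_cast at this ⊢
      linarith
    have hup : a + h ≤ ((j1:ℝ)+1) * 2^k + s := by
      by_contra hup
      push_neg at hup
      have key : 2^k/3 ≤ |((j0 - j1 : ℤ):ℝ)*2^k - s| := by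
        rcases eq_or_ne (j0 - j1) 0 with h0 | h0
        · rw [h0]
          push_cast
          rw [zero_mul, zero_sub, abs_neg, hsab]
        · have h1 : (1:ℝ) ≤ |((j0 - j1:ℤ):ℝ)| := by exact_mod_cast Int.one_le_abs h0
          have hx : 2^k ≤ |((j0-j1:ℤ):ℝ)*2^k| := by
            rw [abs_mul, abs_of_pos hek]
            nlinarith
          have := abs_sub_abs_le_abs_sub (((j0-j1:ℤ):ℝ)*2^k) s
          rw [hsab] at this
          linarith
      have habs : |((j0 - j1 : ℤ):ℝ)*2^k - s| < h := by
        rw [abs_lt]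
        constructor <;> push_cast <;> nlinarith
      linarith
    exact Set.Ico_subset_Ico (by linarith) (by linarith)

end Stmt12Aux


namespace Stmt12Aux

lemma isGrid {n : ℕ} (b : Fin n → Bool) : IsDyadicGrid (Grid b) := by
  refine ⟨?_, ?_, ?_⟩
  · rintro Q ⟨k, j, rfl⟩
    exact ⟨k, _, gcube_eq b k j⟩
  · rintro Q ⟨k, j, rfl⟩ R ⟨l, j', rfl⟩
    rcases le_total k l with hkl | hlk
    · rcases gcube_nest b hkl j j' with h | h
      · exact Or.inl h
      · exact Or.inr (Or.inr h)
    · rcases gcube_nest b hlk j' j with h | h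
      · exact Or.inr (Or.inl (by rw [Set.inter_comm]; exact h))
      · exact Or.inr (Or.inr (by rw [Set.inter_comm]; exact h))
  · intro k
    constructor
    · apply Set.eq_univ_of_forall
      intro x
      choose j hj using fun i => cell_cover (b i) k (x i)
      exact ⟨gcube b k j, ⟨⟨k, j, rfl⟩, _, gcube_eq b k j⟩, fun i _ => hj i⟩
    · rintro Q ⟨⟨k1, j, rfl⟩, c, hc⟩ R ⟨⟨k2, j', rfl⟩, c', hc'⟩ hne
      rcases Nat.eq_zero_or_pos n with hn | hn
      · exfalso
        apply hne
        subst hn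
        have huniv : ∀ (k' : ℤ) (j'' : Fin 0 → ℤ), gcube b k' j'' = Set.univ :=
          fun k' j'' => Set.eq_univ_of_forall fun x i _ => i.elim0
        rw [huniv, huniv]
      · have i0 : Fin n := ⟨0, hn⟩
        have hinj := zpow_right_injective₀ (by norm_num : (0:ℝ) < 2) (by norm_num : (2:ℝ) ≠ 1)
        have hk1 : k1 = k := by
          have := (cube_inj (two_zpow_pos k1) (two_zpow_pos k) i0
            ((gcube_eq b k1 j).symm.trans hc)).2
          exact hinj this
        have hk2 : k2 = k := by
          have := (cube_inj (two_zpow_pos k2) (two_zpow_pos k) i0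
            ((gcube_eq b k2 j').symm.trans hc')).2
          exact hinj this
        by_cases hjj : j = j'
        · exact absurd (by rw [hjj, hk1, hk2]) hne
        · have : ∃ i, j i ≠ j' i := by
            by_contra hno
            push_neg at hno
            exact hjj (funext hno)
          obtain ⟨i, hi⟩ := this
          refine gcube_disj_of i ?_
          rw [hk1, hk2]
          exact cell_disj (b i) k hi

end Stmt12Aux

open Stmt12Aux in
/-- There are `2ⁿ` dyadic grids such that every cube is contained in a cube of one of the
grids of at most `6` times its sidelength (Lemma 2.1). -/
theorem stmt12 (n : ℕ) :
    ∃ D : Fin (2 ^ n) → Set (Set (Rn n)),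
      (∀ α, IsDyadicGrid (D α)) ∧
      ∀ (c : Rn n) (h : ℝ), 0 < h →
        ∃ (α : Fin (2 ^ n)) (c' : Rn n) (h' : ℝ),
          cube c' h' ∈ D α ∧ cube c h ⊆ cube c' h' ∧ h' ≤ 6 * h := by
  classical
  refine ⟨fun a => Grid (fun i => decide (finFunctionFinEquiv.symm a i = 1)), fun a => isGrid _,
    ?_⟩
  intro c h hh
  set k := Int.clog 2 (3*h) with hk
  have h3 : 3*h ≤ (2:ℝ)^k := by
    have := Int.self_le_zpow_clog (by norm_num : 1 < 2) (3*h)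
    push_cast at this
    exact this
  have h6 : (2:ℝ)^k < 6*h := by
    have := Int.zpow_pred_clog_lt_self (R := ℝ) (b := 2) (r := 3*h) (by norm_num)
      (by linarith)
    push_cast at this
    have h2 : (2:ℝ)^k = 2^(k-1) * 2 := by
      rw [← zpow_add_one₀ (by norm_num : (2:ℝ) ≠ 0)]
      norm_num
    rw [h2]
    linarith
  choose b j hbj using fun i => cell_fit hh h3 (c i)
  refine ⟨finFunctionFinEquiv (fun i => if b i then 1 else 0),
    fun i => (j i : ℝ) * 2^k + sft (b i) k, (2:ℝ)^k, ?_, ?_, by linarith⟩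
  · have hb : (fun i => decide (finFunctionFinEquiv.symm
        (finFunctionFinEquiv (fun i => if b i then (1 : Fin 2) else 0)) i = 1)) = b := by
      funext i
      rw [Equiv.symm_apply_apply]
      cases hbi : b i <;> simp [hbi]
    show cube _ _ ∈ Grid _
    rw [hb]
    exact ⟨k, j, (gcube_eq b k j).symm⟩
  · rw [← gcube_eq]
    intro x hx i _
    exact hbj i (hx i trivial)
end
end

section
/- With the notation of the Calderón–Zygmund decomposition above (the family $\{Q_j^k\}$ of maximal cubes at levels $a^k$, $a=2^{m(n+1)}$), the family $\{Q_j^k\}$ is sparse: $\Omega_{k+1}\subset\Omega_k$, the $Q_j^k$ are disjoint in $j$, and $|\Omega_{k+1}\cap Q_j^k|\le\frac12|Q_j^k|$ for all $j,k$; consequently $\int_{\mathbb{R}^n}\mathcal{M}^d(\vec f)^p v\,dx \le a^p\sum_{k,j} v(E_j^k)\Big(\prod_{i=1}^m\frac{1}{|Q_j^k|}\int_{Q_j^k} f_i\Big)^p$ for any weight $v$, where $E_j^k=Q_j^k\setminus\Omega_{k+1}$. -/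
open MeasureTheory ENNReal

noncomputable section

namespace Stmt15Aux

lemma mem_cube {n : ℕ} {c : Rn n} {h : ℝ} {x : Rn n} :
    x ∈ cube c h ↔ ∀ i, x i ∈ Set.Ico (c i) (c i + h) := by
  simp [cube, Set.mem_pi]

lemma measurableSet_cube {n : ℕ} (c : Rn n) (h : ℝ) : MeasurableSet (cube c h) :=
  MeasurableSet.univ_pi fun _ => measurableSet_Ico

lemma volume_cube {n : ℕ} (c : Rn n) (h : ℝ) :
    volume (cube c h) = ENNReal.ofReal h ^ n := by
  rw [cube, volume_pi_pi]
  simp [Real.volume_Ico]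

lemma volume_dyadicCube {n : ℕ} (k : ℤ) (j : Fin n → ℤ) :
    volume (dyadicCube k j) = ENNReal.ofReal ((2:ℝ) ^ (-k)) ^ n :=
  volume_cube _ _

lemma volume_dyadicCube_ne_zero {n : ℕ} (k : ℤ) (j : Fin n → ℤ) :
    volume (dyadicCube k j) ≠ 0 := by
  rw [volume_dyadicCube]
  exact pow_ne_zero _ (by simp [ENNReal.ofReal_eq_zero, not_le]; positivity)

lemma volume_dyadicCube_ne_top {n : ℕ} (k : ℤ) (j : Fin n → ℤ) :
    volume (dyadicCube k j) ≠ ∞ := by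
  rw [volume_dyadicCube]
  exact ENNReal.pow_ne_top ENNReal.ofReal_ne_top

/-- 1-D dyadic intervals: nesting. -/
lemma Ico_dyadic_subset {k k' : ℤ} {j j' : ℤ} (hkk : k ≤ k') {x : ℝ}
    (h1 : x ∈ Set.Ico ((j:ℝ) * 2^(-k)) ((j:ℝ) * 2^(-k) + 2^(-k)))
    (h2 : x ∈ Set.Ico ((j':ℝ) * 2^(-k')) ((j':ℝ) * 2^(-k') + 2^(-k'))) :
    Set.Ico ((j':ℝ) * 2^(-k')) ((j':ℝ) * 2^(-k') + 2^(-k')) ⊆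
      Set.Ico ((j:ℝ) * 2^(-k)) ((j:ℝ) * 2^(-k) + 2^(-k)) := by
  have ht : (0:ℝ) < 2^(-k') := by positivity
  set d : ℕ := (k' - k).toNat with hd
  have hdk : -k = (d : ℤ) + (-k') := by omega
  have h2k : (2:ℝ)^(-k) = 2^d * 2^(-k') := by
    rw [hdk, zpow_add₀ (by norm_num : (2:ℝ) ≠ 0), zpow_natCast]
  have key1 : (j * 2^d : ℤ) ≤ j' := by
    have hr : (j:ℝ) * 2^d * 2^(-k') < ((j':ℝ) + 1) * 2^(-k') := by
      calc (j:ℝ) * 2^d * 2^(-k') = (j:ℝ) * 2^(-k) := by rw [h2k]; ring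
        _ ≤ x := h1.1
        _ < (j':ℝ) * 2^(-k') + 2^(-k') := h2.2
        _ = ((j':ℝ) + 1) * 2^(-k') := by ring
    have : (j:ℝ) * 2^d < (j':ℝ) + 1 := lt_of_mul_lt_mul_right (by linarith) ht.le
    have h5 : ((j * 2^d : ℤ) : ℝ) < ((j' + 1 : ℤ) : ℝ) := by push_cast; linarith
    have h6 : (j * 2^d : ℤ) < j' + 1 := by exact_mod_cast h5
    omega
  have key2 : j' + 1 ≤ (j + 1) * 2^d := by
    have hr : (j':ℝ) * 2^(-k') < ((j:ℝ) + 1) * 2^d * 2^(-k') := by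
      calc (j':ℝ) * 2^(-k') ≤ x := h2.1
        _ < (j:ℝ) * 2^(-k) + 2^(-k) := h1.2
        _ = ((j:ℝ) + 1) * 2^d * 2^(-k') := by rw [h2k]; ring
    have : (j':ℝ) < ((j:ℝ) + 1) * 2^d := lt_of_mul_lt_mul_right (by linarith) ht.le
    have h5 : ((j' : ℤ) : ℝ) < (((j + 1) * 2^d : ℤ) : ℝ) := by push_cast; linarith
    have h6 : (j' : ℤ) < (j + 1) * 2^d := by exact_mod_cast h5
    omega
  intro y hy
  constructor
  · calc (j:ℝ) * 2^(-k) = ((j * 2^d : ℤ) : ℝ) * 2^(-k') := by push_cast; rw [h2k]; ring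
      _ ≤ (j':ℝ) * 2^(-k') := by
        apply mul_le_mul_of_nonneg_right _ ht.le
        exact_mod_cast key1
      _ ≤ y := hy.1
  · calc y < (j':ℝ) * 2^(-k') + 2^(-k') := hy.2
      _ = ((j' + 1 : ℤ) : ℝ) * 2^(-k') := by push_cast; ring
      _ ≤ (((j + 1) * 2^d : ℤ) : ℝ) * 2^(-k') := by
        apply mul_le_mul_of_nonneg_right _ ht.le
        exact_mod_cast key2
      _ = (j:ℝ) * 2^(-k) + 2^(-k) := by push_cast; rw [h2k]; ring

lemma dyadicCube_subset {n : ℕ} {k k' : ℤ} {j j' : Fin n → ℤ} (hkk : k ≤ k')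
    {x : Rn n} (h1 : x ∈ dyadicCube k j) (h2 : x ∈ dyadicCube k' j') :
    dyadicCube k' j' ⊆ dyadicCube k j := by
  intro y hy
  rw [dyadicCube, mem_cube] at h1 h2 hy ⊢
  exact fun i => Ico_dyadic_subset hkk (h1 i) (h2 i) (hy i)

lemma dyadic_nested {n : ℕ} {Q R : Set (Rn n)} (hQ : IsDyadicCube Q) (hR : IsDyadicCube R)
    (h : (Q ∩ R).Nonempty) : Q ⊆ R ∨ R ⊆ Q := by
  obtain ⟨k, j, rfl⟩ := hQ
  obtain ⟨k', j', rfl⟩ := hR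
  obtain ⟨x, hx1, hx2⟩ := h
  rcases le_total k k' with hkk | hkk
  · exact Or.inr (dyadicCube_subset hkk hx1 hx2)
  · exact Or.inl (dyadicCube_subset hkk hx2 hx1)

lemma dyadic_parent {n : ℕ} (hn : 0 < n) (k : ℤ) (j : Fin n → ℤ) :
    ∃ R, IsDyadicCube R ∧ dyadicCube k j ⊆ R ∧ dyadicCube k j ≠ R ∧
      volume R = 2 ^ n * volume (dyadicCube k j) := by
  refine ⟨dyadicCube (k-1) (fun i => j i / 2), ⟨_, _, rfl⟩, ?_, ?_, ?_⟩
  · -- subset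
    have hx1 : (fun i => (j i : ℝ) * 2^(-k)) ∈ dyadicCube k j := by
      rw [dyadicCube, mem_cube]
      intro i
      constructor
      · exact le_refl _
      · have : (0:ℝ) < 2^(-k) := by positivity
        linarith
    have hx2 : (fun i => (j i : ℝ) * 2^(-k)) ∈ dyadicCube (k-1) (fun i => j i / 2) := by
      rw [dyadicCube, mem_cube]
      intro i
      have hq : 2 * (j i / 2) ≤ j i ∧ j i < 2 * (j i / 2) + 2 := by omega
      have h2k : (2:ℝ)^(-(k-1)) = 2 * 2^(-k) := by
        rw [show -(k-1) = 1 + (-k) by ring, zpow_add₀ (by norm_num : (2:ℝ) ≠ 0), zpow_one]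
      have ht : (0:ℝ) < 2^(-k) := by positivity
      constructor
      · calc ((j i / 2 : ℤ) : ℝ) * 2^(-(k-1)) = ((2 * (j i / 2) : ℤ) : ℝ) * 2^(-k) := by
              push_cast; rw [h2k]; ring
          _ ≤ (j i : ℝ) * 2^(-k) := by
              apply mul_le_mul_of_nonneg_right _ ht.le
              exact_mod_cast hq.1
      · calc (j i : ℝ) * 2^(-k) < ((2 * (j i / 2) + 2 : ℤ) : ℝ) * 2^(-k) := by
              apply mul_lt_mul_of_pos_right _ ht
              exact_mod_cast hq.2
          _ = ((j i / 2 : ℤ) : ℝ) * 2^(-(k-1)) + 2^(-(k-1)) := by push_cast; rw [h2k]; ring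
    exact dyadicCube_subset (by omega) hx2 hx1
  · -- ne, via volume
    intro heq
    have hv : volume (dyadicCube k j) = volume (dyadicCube (k-1) (fun i => j i / 2)) := by
      rw [heq]
    rw [volume_dyadicCube, volume_dyadicCube] at hv
    have hlt : ENNReal.ofReal ((2:ℝ)^(-k)) < ENNReal.ofReal ((2:ℝ)^(-(k-1))) := by
      apply ENNReal.ofReal_lt_ofReal_iff_of_nonneg (by positivity) |>.2
      apply zpow_lt_zpow_right₀ (by norm_num : (1:ℝ) < 2)
      omega
    have := ENNReal.pow_lt_pow_left hn.ne' hlt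
    exact absurd hv (ne_of_lt this)
  · -- volume
    rw [volume_dyadicCube, volume_dyadicCube]
    have h2k : (2:ℝ)^(-(k-1)) = 2 * 2^(-k) := by
      rw [show -(k-1) = 1 + (-k) by ring, zpow_add₀ (by norm_num : (2:ℝ) ≠ 0), zpow_one]
    rw [h2k, ENNReal.ofReal_mul (by norm_num), ENNReal.ofReal_ofNat, mul_pow]

lemma tsum_prod_rpow_le {ι : Type*} [Countable ι] {m : ℕ} (z : Fin m → ι → ℝ≥0∞)
    {r : ℝ} (hr0 : 0 ≤ r) (hr : (m : ℝ) * r = 1) :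
    ∑' j, ∏ i, z i j ^ r ≤ ∏ i, (∑' j, z i j) ^ r := by
  letI : MeasurableSpace ι := ⊤
  haveI : MeasurableSingletonClass ι := ⟨fun _ => MeasurableSpace.measurableSet_top⟩
  rw [← lintegral_count]
  calc ∫⁻ a, ∏ i, z i a ^ r ∂Measure.count
      ≤ ∏ i, (∫⁻ a, z i a ∂Measure.count) ^ r := by
        apply ENNReal.lintegral_prod_norm_pow_le _ (fun i _ => (measurable_from_top).aemeasurable)
        · simpa using hr
        · exact fun _ _ => hr0
    _ = ∏ i, (∑' j, z i j) ^ r := by simp_rw [lintegral_count]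

end Stmt15Aux

/-- The Calderón–Zygmund cubes form a sparse family and give the basic estimate for
`∫ (𝓜^d ⃗f)^p v`. -/
theorem stmt15 {n m : ℕ} (hm : 0 < m) (pp : ℝ) (hpp : 0 < pp)
    (f : Fin m → Rn n → ℝ) (hf0 : ∀ i x, 0 ≤ f i x) (hfm : ∀ i, Measurable (f i))
    (hfae : ∀ᵐ x ∂(volume : Measure (Rn n)), MMd f x < ∞)
    (v : Rn n → ℝ) (hv0 : ∀ x, 0 ≤ v x) (hvm : Measurable v)
    {J : Type} (Q : ℤ → J → Set (Rn n))
    (hQd : ∀ k j, IsDyadicCube (Q k j))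
    (hinj : ∀ (k : ℤ) (j j' : J), j ≠ j' → Q k j ≠ Q k j')
    (hcover : ∀ k : ℤ, (⋃ j, Q k j) = {x | ((2:ℝ≥0∞) ^ (m * (n+1))) ^ k < MMd f x})
    (hgt : ∀ (k : ℤ) (j : J), ((2:ℝ≥0∞) ^ (m * (n+1))) ^ k < ∏ i, avg (Q k j) (f i))
    (hmax : ∀ (k : ℤ) (j : J), ∀ R : Set (Rn n), IsDyadicCube R → Q k j ⊆ R → Q k j ≠ R →
      ∏ i, avg R (f i) ≤ ((2:ℝ≥0∞) ^ (m * (n+1))) ^ k) :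
    IsSparse J Q ∧
      (∫⁻ x, MMd f x ^ pp * ENNReal.ofReal (v x)) ≤
        ((2:ℝ≥0∞) ^ (m * (n+1))) ^ pp *
          ∑' kj : ℤ × J,
            setInt (Q kj.1 kj.2 \ ⋃ j', Q (kj.1 + 1) j') v *
              (∏ i, avg (Q kj.1 kj.2) (f i)) ^ pp := by
  classical
  haveI hJc : Countable J := by
    have hinj0 : Function.Injective (fun j : J => Q 0 j) := by
      intro j j' h
      by_contra hne
      exact hinj 0 j j' hne h
    have hrange : ∀ j : J, Q 0 j ∈ Set.range (fun p : ℤ × (Fin n → ℤ) => dyadicCube p.1 p.2) := by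
      intro j; obtain ⟨k', j', h⟩ := hQd 0 j; exact ⟨(k', j'), h.symm⟩
    haveI : Countable (Set.range (fun p : ℤ × (Fin n → ℤ) => dyadicCube p.1 p.2)) :=
      (Set.countable_range _).to_subtype
    exact Function.Injective.countable
      (f := fun j : J => (⟨Q 0 j, hrange j⟩ : Set.range (fun p : ℤ × (Fin n → ℤ) => dyadicCube p.1 p.2)))
      (fun j j' h => hinj0 (congrArg Subtype.val h))
  set a : ℝ≥0∞ := (2:ℝ≥0∞) ^ (m * (n+1)) with ha_def
  have hmn : m * (n+1) ≠ 0 := by positivity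
  have ha0 : a ≠ 0 := by rw [ha_def]; exact pow_ne_zero _ (by norm_num)
  have haT : a ≠ ∞ := by rw [ha_def]; exact ENNReal.pow_ne_top (by norm_num)
  have ha1 : (1:ℝ≥0∞) < a := by
    rw [ha_def]
    exact lt_of_lt_of_le ENNReal.one_lt_two (le_self_pow₀ ENNReal.one_lt_two.le hmn)
  have hz0 : ∀ k : ℤ, a ^ k ≠ 0 := fun k => (ENNReal.zpow_pos ha0 haT k).ne'
  have hzT : ∀ k : ℤ, a ^ k ≠ ∞ := fun k => (ENNReal.zpow_lt_top ha0 haT k).ne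
  have hzlt : ∀ k : ℤ, a ^ k < a ^ (k+1) := by
    intro k
    rw [ENNReal.zpow_add ha0 haT k 1, zpow_one]
    calc a^k = a^k * 1 := (mul_one _).symm
      _ < a^k * a := (ENNReal.mul_lt_mul_iff_right (hz0 k) (hzT k)).2 ha1
  have hQm : ∀ k j, MeasurableSet (Q k j) := by
    intro k j; obtain ⟨k', j', h⟩ := hQd k j; rw [h]; exact Stmt15Aux.measurableSet_cube _ _
  have hle_MMd : ∀ (R : Set (Rn n)), IsDyadicCube R → ∀ x ∈ R, ∏ i, avg R (f i) ≤ MMd f x := by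
    intro R hR x hx
    unfold MMd
    refine le_iSup_of_le R ?_
    refine le_iSup_of_le hR ?_
    exact le_iSup_of_le hx le_rfl
  have hnJ : J → 0 < n := by
    intro j0
    by_contra hn0
    push_neg at hn0
    have hall : ∀ (x : Rn n) (k : ℤ), a ^ k < MMd f x := by
      intro x k
      have hx : x ∈ Q k j0 := by
        obtain ⟨k', j', h⟩ := hQd k j0
        rw [h, dyadicCube, Stmt15Aux.mem_cube]
        intro i
        exact absurd i.isLt (by omega)
      exact lt_of_lt_of_le (hgt k j0) (hle_MMd _ (hQd k j0) x hx)
    have hnot : ∀ x : Rn n, ¬ (MMd f x < ∞) := by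
      intro x hlt
      obtain ⟨k, hk1, hk2⟩ := ENNReal.exists_mem_Ico_zpow
        (((ENNReal.zpow_pos ha0 haT 0).trans (hall x 0)).ne') hlt.ne ha1 haT
      exact absurd (hall x (k+1)) (not_lt.2 hk2.le)
    rw [ae_iff] at hfae
    have huniv : {x : Rn n | ¬ MMd f x < ∞} = Set.univ := Set.eq_univ_of_forall hnot
    rw [huniv] at hfae
    have hone : (volume : Measure (Rn n)) Set.univ = 1 := by
      haveI : IsEmpty (Fin n) := ⟨fun i => absurd i.isLt (by omega)⟩
      rw [MeasureTheory.volume_pi, Measure.pi_univ]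
      simp
    rw [hone] at hfae
    exact one_ne_zero hfae
  have hdisj : ∀ (k : ℤ) (j j' : J), j ≠ j' → Q k j ∩ Q k j' = ∅ := by
    intro k j j' hne
    by_contra hcon
    rcases Stmt15Aux.dyadic_nested (hQd k j) (hQd k j')
        (Set.nonempty_iff_ne_empty.2 hcon) with hs | hs
    · exact absurd (hmax k j _ (hQd k j') hs (hinj k j j' hne)) (not_le.2 (hgt k j'))
    · exact absurd (hmax k j' _ (hQd k j) hs (hinj k j' j hne.symm)) (not_le.2 (hgt k j))
  have hQsub : ∀ (k : ℤ) (j j' : J), (Q (k+1) j' ∩ Q k j).Nonempty → Q (k+1) j' ⊆ Q k j := by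
    intro k j j' hne
    rcases Stmt15Aux.dyadic_nested (hQd (k+1) j') (hQd k j) hne with hs | hs
    · exact hs
    · rcases eq_or_ne (Q k j) (Q (k+1) j') with heq | hne2
      · exact le_of_eq heq.symm
      · exfalso
        have h1 := hmax k j _ (hQd (k+1) j') hs hne2
        exact absurd (lt_of_lt_of_le (hgt (k+1) j') h1) (not_lt.2 (hzlt k).le)
  have hmeas : ∀ (k : ℤ) (j : J),
      volume ((⋃ j', Q (k+1) j') ∩ Q k j) ≤ volume (Q k j) / 2 := by
    intro k j
    have hn : 0 < n := hnJ j
    set r : ℝ := 1 / (m : ℝ) with hr_def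
    have hr0 : 0 ≤ r := by positivity
    have hrm : (m : ℝ) * r = 1 := by
      rw [hr_def]
      field_simp
    obtain ⟨kq, jq, hQeq⟩ := hQd k j
    obtain ⟨R, hRd, hsubR, hneR, hvolR⟩ := Stmt15Aux.dyadic_parent hn kq jq
    rw [← hQeq] at hsubR hneR hvolR
    obtain ⟨kR, jR, hReq⟩ := hRd
    have hR0 : volume R ≠ 0 := by rw [hReq]; exact Stmt15Aux.volume_dyadicCube_ne_zero _ _
    have hRT : volume R ≠ ∞ := by rw [hReq]; exact Stmt15Aux.volume_dyadicCube_ne_top _ _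
    have hmaxR : ∏ i, avg R (f i) ≤ a ^ k := hmax k j R ⟨kR, jR, hReq⟩ hsubR hneR
    have hIntR : ∀ i, setInt (Q k j) (f i) ≤ avg R (f i) * volume R := by
      intro i
      rw [avg, ENNReal.div_mul_cancel hR0 hRT]
      exact lintegral_mono_set hsubR
    set g : J → Set (Rn n) := fun j' => Q (k+1) j' ∩ Q k j with hg_def
    have hgm : ∀ j', MeasurableSet (g j') := fun j' => (hQm _ j').inter (hQm k j)
    have hgd : Pairwise (Function.onFun Disjoint g) := by
      intro j1 j2 hne
      have h := hdisj (k+1) j1 j2 hne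
      exact Set.disjoint_of_subset Set.inter_subset_left Set.inter_subset_left
        (Set.disjoint_iff_inter_eq_empty.2 h)
    have hgsub : ∀ j', g j' ⊆ Q k j := fun j' => Set.inter_subset_right
    have hstep : ∀ j', volume (g j') ≤
        (a ^ (-(k+1)))^r * ∏ i, (setInt (g j') (f i)) ^ r := by
      intro j'
      rcases Set.eq_empty_or_nonempty (g j') with hemp | hne
      · rw [hemp]; simp
      · have hgq : g j' = Q (k+1) j' := Set.inter_eq_left.2 (hQsub k j j' hne)
        rw [hgq]
        obtain ⟨kq', jq', hQ'eq⟩ := hQd (k+1) j'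
        have hW0 : volume (Q (k+1) j') ≠ 0 := by
          rw [hQ'eq]; exact Stmt15Aux.volume_dyadicCube_ne_zero _ _
        have hWT : volume (Q (k+1) j') ≠ ∞ := by
          rw [hQ'eq]; exact Stmt15Aux.volume_dyadicCube_ne_top _ _
        set W := volume (Q (k+1) j') with hW
        have h1 : ∏ i, avg (Q (k+1) j') (f i)
            = (∏ i, setInt (Q (k+1) j') (f i)) / W ^ m := by
          simp_rw [avg, div_eq_mul_inv]
          rw [Finset.prod_mul_distrib, Finset.prod_const, Finset.card_univ, Fintype.card_fin,
            ← ENNReal.inv_pow]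
        have h2 : a ^ (k+1) * W ^ m ≤ ∏ i, setInt (Q (k+1) j') (f i) := by
          have hlt := (hgt (k+1) j').le
          rw [h1] at hlt
          calc a^(k+1) * W^m ≤ ((∏ i, setInt (Q (k+1) j') (f i)) / W^m) * W^m :=
                mul_le_mul_left hlt _
            _ = ∏ i, setInt (Q (k+1) j') (f i) :=
                ENNReal.div_mul_cancel (pow_ne_zero m hW0) (ENNReal.pow_ne_top hWT)
        have h3 : W ^ m ≤ (∏ i, setInt (Q (k+1) j') (f i)) / a ^ (k+1) := by
          rw [ENNReal.le_div_iff_mul_le (Or.inl (hz0 _)) (Or.inl (hzT _))]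
          rw [mul_comm] at h2
          exact h2
        have h4 : W = (W ^ m) ^ r := by
          rw [← ENNReal.rpow_natCast W m, ← ENNReal.rpow_mul, hrm, ENNReal.rpow_one]
        calc W = (W^m)^r := h4
          _ ≤ ((∏ i, setInt (Q (k+1) j') (f i)) / a^(k+1)) ^ r :=
              ENNReal.rpow_le_rpow h3 hr0
          _ = (a^(-(k+1)))^r * ∏ i, setInt (Q (k+1) j') (f i) ^ r := by
              rw [ENNReal.div_eq_inv_mul, ← ENNReal.zpow_neg a,
                ENNReal.mul_rpow_of_nonneg _ _ hr0, ENNReal.prod_rpow_of_nonneg hr0]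
    calc volume ((⋃ j', Q (k+1) j') ∩ Q k j)
        = volume (⋃ j', g j') := by rw [Set.iUnion_inter]
      _ ≤ ∑' j', volume (g j') := measure_iUnion_le _
      _ ≤ ∑' j', (a^(-(k+1)))^r * ∏ i, (setInt (g j') (f i)) ^ r :=
          ENNReal.tsum_le_tsum hstep
      _ = (a^(-(k+1)))^r * ∑' j', ∏ i, (setInt (g j') (f i)) ^ r := ENNReal.tsum_mul_left
      _ ≤ (a^(-(k+1)))^r * ∏ i, (∑' j', setInt (g j') (f i)) ^ r :=
          mul_le_mul_right (Stmt15Aux.tsum_prod_rpow_le (fun i j' => setInt (g j') (f i)) hr0 hrm) _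
      _ ≤ (a^(-(k+1)))^r * ∏ i, (avg R (f i) * volume R) ^ r := by
          apply mul_le_mul_right
          apply Finset.prod_le_prod'
          intro i _
          apply ENNReal.rpow_le_rpow _ hr0
          refine le_trans ?_ (hIntR i)
          have heq : ∑' j', setInt (g j') (f i)
              = ∫⁻ x in ⋃ j', g j', ENNReal.ofReal (f i x) :=
            (lintegral_iUnion hgm hgd _).symm
          rw [heq]
          exact lintegral_mono_set (Set.iUnion_subset hgsub)
      _ = (a^(-(k+1)))^r * ((∏ i, avg R (f i)) ^ r * volume R) := by
          congr 1
          simp_rw [ENNReal.mul_rpow_of_nonneg _ _ hr0]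
          rw [Finset.prod_mul_distrib, Finset.prod_const, Finset.card_univ, Fintype.card_fin,
            ENNReal.prod_rpow_of_nonneg hr0,
            ← ENNReal.rpow_natCast (volume R ^ r) m, ← ENNReal.rpow_mul,
            mul_comm r (m:ℝ), hrm, ENNReal.rpow_one]
      _ ≤ (a^(-(k+1)))^r * ((a^k) ^ r * volume R) := by
          apply mul_le_mul_right
          exact mul_le_mul_left (ENNReal.rpow_le_rpow hmaxR hr0) _
      _ = ((a^(-(k+1)) * a^k) ^ r) * volume R := by
          rw [ENNReal.mul_rpow_of_nonneg _ _ hr0, mul_assoc]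
      _ = (a ^ (-1 : ℤ)) ^ r * (2^n * volume (Q k j)) := by
          rw [← ENNReal.zpow_add ha0 haT, hvolR]
          norm_num
      _ = volume (Q k j) / 2 := by
          have hconst : (a ^ (-1:ℤ))^r * (2:ℝ≥0∞)^n = 2⁻¹ := by
            rw [ENNReal.zpow_neg a, zpow_one, ENNReal.inv_rpow]
            have har : a ^ r = 2 ^ (n+1 : ℕ) := by
              rw [ha_def, ← ENNReal.rpow_natCast 2 (m*(n+1)), ← ENNReal.rpow_mul,
                ← ENNReal.rpow_natCast 2 (n+1)]
              congr 1
              rw [hr_def]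
              push_cast
              field_simp
            rw [har, pow_succ,
              ENNReal.mul_inv (Or.inl (pow_ne_zero _ (by norm_num)))
                (Or.inl (ENNReal.pow_ne_top (by norm_num)))]
            calc (2^n : ℝ≥0∞)⁻¹ * 2⁻¹ * 2^n = 2⁻¹ * ((2^n)⁻¹ * 2^n) := by ring
              _ = 2⁻¹ := by
                  rw [ENNReal.inv_mul_cancel (pow_ne_zero _ (by norm_num))
                    (ENNReal.pow_ne_top (by norm_num)), mul_one]
          rw [← mul_assoc, hconst, ENNReal.div_eq_inv_mul]
  refine ⟨⟨hdisj, ?_, hmeas⟩, ?_⟩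
  · intro k x hx
    rw [hcover] at hx ⊢
    exact (hzlt k).trans hx
  · -- the integral estimate
    set E : ℤ × J → Set (Rn n) := fun kj => Q kj.1 kj.2 \ ⋃ j', Q (kj.1+1) j' with hE_def
    have hEm : ∀ kj, MeasurableSet (E kj) :=
      fun kj => (hQm _ _).diff (MeasurableSet.iUnion fun j' => hQm _ _)
    set T : Set (Rn n) := ⋃ kj : ℤ × J, E kj with hT_def
    have hTm : MeasurableSet T := MeasurableSet.iUnion hEm
    have hout : ∀ᵐ x ∂(volume : Measure (Rn n)),
        x ∉ T → MMd f x ^ pp * ENNReal.ofReal (v x) = 0 := by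
      filter_upwards [hfae] with x hxfin hxT
      rcases eq_or_ne (MMd f x) 0 with h0 | h0
      · rw [h0, ENNReal.zero_rpow_of_pos hpp, zero_mul]
      exfalso
      obtain ⟨k, hk1, hk2⟩ := ENNReal.exists_mem_Ico_zpow h0 hxfin.ne ha1 haT
      rcases lt_or_eq_of_le hk1 with hlt | heq
      · apply hxT
        have hx : x ∈ ⋃ j', Q k j' := by rw [hcover]; exact hlt
        obtain ⟨j0, hj0⟩ := Set.mem_iUnion.1 hx
        have hxnot : x ∉ ⋃ j', Q (k+1) j' := by
          rw [hcover]
          exact not_lt.2 hk2.le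
        exact Set.mem_iUnion.2 ⟨(k, j0), ⟨hj0, hxnot⟩⟩
      · apply hxT
        have hlt' : a^(k-1) < MMd f x := by
          have h := hzlt (k-1)
          rw [sub_add_cancel] at h
          rw [← heq]
          exact h
        have hx : x ∈ ⋃ j', Q (k-1) j' := by rw [hcover]; exact hlt'
        obtain ⟨j0, hj0⟩ := Set.mem_iUnion.1 hx
        have hxnot : x ∉ ⋃ j', Q ((k-1)+1) j' := by
          rw [hcover, sub_add_cancel]
          exact not_lt.2 heq.ge
        exact Set.mem_iUnion.2 ⟨(k-1, j0), ⟨hj0, hxnot⟩⟩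
    have hsplit : (∫⁻ x, MMd f x ^ pp * ENNReal.ofReal (v x)) =
        (∫⁻ x in T, MMd f x ^ pp * ENNReal.ofReal (v x)) +
        (∫⁻ x in Tᶜ, MMd f x ^ pp * ENNReal.ofReal (v x)) := (lintegral_add_compl _ hTm).symm
    have hzero : (∫⁻ x in Tᶜ, MMd f x ^ pp * ENNReal.ofReal (v x)) = 0 := by
      have hae : ∀ᵐ x ∂(volume.restrict Tᶜ), MMd f x ^ pp * ENNReal.ofReal (v x) = 0 := by
        rw [ae_restrict_iff' hTm.compl]
        filter_upwards [hout] with x hx hxc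
        exact hx hxc
      rw [lintegral_congr_ae hae, lintegral_zero]
    have hbound : ∀ kj : ℤ × J, (∫⁻ x in E kj, MMd f x ^ pp * ENNReal.ofReal (v x)) ≤
        a ^ pp * (setInt (E kj) v * (∏ i, avg (Q kj.1 kj.2) (f i)) ^ pp) := by
      rintro ⟨k, j⟩
      have hub : ∀ x ∈ E (k, j), MMd f x ^ pp * ENNReal.ofReal (v x) ≤
          (a ^ pp * (∏ i, avg (Q k j) (f i)) ^ pp) * ENNReal.ofReal (v x) := by
        intro x hx
        apply mul_le_mul_left
        have hMle : MMd f x ≤ a ^ (k+1) := by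
          by_contra hcon
          push_neg at hcon
          exact hx.2 (by rw [hcover]; exact hcon)
        have hMle' : MMd f x ≤ a * ∏ i, avg (Q k j) (f i) := by
          calc MMd f x ≤ a^(k+1) := hMle
            _ = a^k * a := by rw [ENNReal.zpow_add ha0 haT k 1, zpow_one]
            _ ≤ (∏ i, avg (Q k j) (f i)) * a := mul_le_mul_left (hgt k j).le _
            _ = a * ∏ i, avg (Q k j) (f i) := mul_comm _ _
        calc MMd f x ^ pp ≤ (a * ∏ i, avg (Q k j) (f i)) ^ pp :=
              ENNReal.rpow_le_rpow hMle' hpp.le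
          _ = a ^ pp * (∏ i, avg (Q k j) (f i)) ^ pp :=
              ENNReal.mul_rpow_of_nonneg _ _ hpp.le
      calc (∫⁻ x in E (k,j), MMd f x ^ pp * ENNReal.ofReal (v x))
          ≤ ∫⁻ x in E (k,j), (a^pp * (∏ i, avg (Q k j) (f i)) ^ pp) * ENNReal.ofReal (v x) :=
            setLIntegral_mono' (hEm (k,j)) hub
        _ = (a^pp * (∏ i, avg (Q k j) (f i)) ^ pp) * setInt (E (k,j)) v := by
            rw [lintegral_const_mul _ hvm.ennreal_ofReal]
            rfl
        _ = a ^ pp * (setInt (E (k,j)) v * (∏ i, avg (Q k j) (f i)) ^ pp) := by ring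
    calc (∫⁻ x, MMd f x ^ pp * ENNReal.ofReal (v x))
        = (∫⁻ x in T, MMd f x ^ pp * ENNReal.ofReal (v x)) +
          (∫⁻ x in Tᶜ, MMd f x ^ pp * ENNReal.ofReal (v x)) := hsplit
      _ = (∫⁻ x in T, MMd f x ^ pp * ENNReal.ofReal (v x)) := by rw [hzero, add_zero]
      _ ≤ ∑' kj : ℤ × J, (∫⁻ x in E kj, MMd f x ^ pp * ENNReal.ofReal (v x)) :=
          lintegral_iUnion_le _ _
      _ ≤ ∑' kj : ℤ × J, a ^ pp * (setInt (E kj) v * (∏ i, avg (Q kj.1 kj.2) (f i)) ^ pp) :=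
          ENNReal.tsum_le_tsum hbound
      _ = a ^ pp * ∑' kj : ℤ × J, setInt (E kj) v * (∏ i, avg (Q kj.1 kj.2) (f i)) ^ pp :=
          ENNReal.tsum_mul_left
end
end

section
/- Let $\sigma_1,\dots,\sigma_m$ be weights, $1<p_i<\infty$, $\frac1p=\sum_i\frac1{p_i}$, and suppose $[\vec\sigma]_{W^\infty_{\vec P}}<\infty$. Then for every dyadic cube $R$ and every sparse subfamily $\{Q_j^k\}$ of dyadic cubes contained in $R$, $\sum_{Q_j^k\subset R}\prod_{i=1}^m\sigma_i(Q_j^k)^{p/p_i}\le 2[\vec\sigma]_{W^\infty_{\vec P}}\int_R\prod_{i=1}^m\sigma_i^{p/p_i}\,dx$. -/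
open MeasureTheory ENNReal

noncomputable section

lemma aux_cube_meas {n : ℕ} (c : Rn n) (h : ℝ) : MeasurableSet (cube c h) :=
  MeasurableSet.univ_pi fun _ => measurableSet_Ico

lemma aux_dyadic_meas {n : ℕ} {Q : Set (Rn n)} (hQ : IsDyadicCube Q) : MeasurableSet Q := by
  obtain ⟨k, j, rfl⟩ := hQ; exact aux_cube_meas _ _

lemma aux_volume_cube {n : ℕ} (c : Rn n) (h : ℝ) :
    volume (cube c h) = ENNReal.ofReal h ^ n := by
  rw [cube, volume_pi_pi]
  simp [Real.volume_Ico]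

lemma aux_dyadic_vol {n : ℕ} {Q : Set (Rn n)} (hQ : IsDyadicCube Q) :
    volume Q ≠ 0 ∧ volume Q ≠ ⊤ := by
  obtain ⟨k, j, rfl⟩ := hQ
  rw [dyadicCube, aux_volume_cube]
  have h2 : (0:ℝ) < (2:ℝ) ^ (-k) := by positivity
  constructor
  · exact pow_ne_zero _ (by rw [Ne, ENNReal.ofReal_eq_zero, not_le]; exact h2)
  · exact ENNReal.pow_ne_top ENNReal.ofReal_ne_top

lemma aux_dyadic_countable (n : ℕ) : {S : Set (Rn n) | IsDyadicCube S}.Countable := by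
  have hsub : {S : Set (Rn n) | IsDyadicCube S} ⊆
      Set.range (fun kj : ℤ × (Fin n → ℤ) => dyadicCube kj.1 kj.2) := by
    rintro S ⟨k, j, rfl⟩; exact ⟨(k, j), rfl⟩
  exact Set.Countable.mono hsub (Set.countable_range _)

lemma aux_iUnion_meas {n : ℕ} {J : Type} (Q : J → Set (Rn n))
    (hQ : ∀ j, Q j = ∅ ∨ IsDyadicCube (Q j)) : MeasurableSet (⋃ j, Q j) := by
  rw [← Set.sUnion_range]
  apply MeasurableSet.sUnion
  · apply Set.Countable.mono ?_ ((aux_dyadic_countable n).insert ∅)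
    rintro S ⟨j, rfl⟩
    rcases hQ j with h | h
    · exact Set.mem_insert_iff.mpr (Or.inl h)
    · exact Set.mem_insert_iff.mpr (Or.inr h)
  · rintro S ⟨j, rfl⟩
    rcases hQ j with h | h
    · rw [h]; exact MeasurableSet.empty
    · exact aux_dyadic_meas h

lemma aux_rpow_sum {m : ℕ} (v : ℝ≥0∞) (A : Fin m → ℝ) (hA : ∀ i, 0 ≤ A i) :
    v ^ (∑ i, A i) = ∏ i, v ^ A i := by
  classical
  have key : ∀ s : Finset (Fin m), v ^ (∑ i ∈ s, A i) = ∏ i ∈ s, v ^ A i := by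
    intro s
    induction s using Finset.cons_induction with
    | empty => simp
    | cons a s ha ih =>
      rw [Finset.sum_cons, Finset.prod_cons,
        ENNReal.rpow_add_of_nonneg _ _ (hA a) (Finset.sum_nonneg fun i _ => hA i), ih]
  exact key Finset.univ

lemma aux_le_HLM {n : ℕ} {Q : Set (Rn n)} (hQ : IsCube Q) {x : Rn n} (hx : x ∈ Q)
    (g : Rn n → ℝ) : avg Q g ≤ HLM g x :=
  le_iSup_of_le Q (le_iSup_of_le hQ (le_iSup_of_le hx le_rfl))

lemma aux_percube {n m : ℕ} (A : Fin m → ℝ) (hA : ∀ i, 0 < A i)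
    (hA1 : ∑ i, A i = 1) (σ : Fin m → Rn n → ℝ)
    (R Qc : Set (Rn n)) (hQc : IsDyadicCube Qc) (hQR : Qc ⊆ R)
    (E : Set (Rn n)) (hE : MeasurableSet E) (hEQ : E ⊆ Qc)
    (hvol : volume Qc ≤ 2 * volume E) :
    ∏ i, setInt Qc (σ i) ^ A i ≤
      2 * ∫⁻ x in E, ∏ i, HLM (Set.indicator R (σ i)) x ^ A i := by
  have hv := aux_dyadic_vol hQc
  have hcube : IsCube Qc := by
    obtain ⟨k, j, rfl⟩ := hQc
    exact ⟨_, (2:ℝ) ^ (-k), by positivity, rfl⟩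
  set v := volume Qc with hvdef
  set c : Fin m → ℝ≥0∞ := fun i => setInt Qc (σ i) / v with hcdef
  have hstepA : ∀ x ∈ Qc, ∀ i, c i ≤ HLM (Set.indicator R (σ i)) x := by
    intro x hx i
    have hind : setInt Qc (Set.indicator R (σ i)) = setInt Qc (σ i) := by
      unfold setInt
      refine setLIntegral_congr_fun (aux_dyadic_meas hQc) ?_
      intro y hy
      simp only [Set.indicator_of_mem (hQR hy)]
    have heq : avg Qc (Set.indicator R (σ i)) = c i := by
      rw [hcdef, avg, hind, hvdef]
    exact le_trans (le_of_eq heq.symm) (aux_le_HLM hcube hx _)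
  have h1 : (∏ i, c i ^ A i) * volume E ≤
      ∫⁻ x in E, ∏ i, HLM (Set.indicator R (σ i)) x ^ A i := by
    rw [← setLIntegral_const]
    apply setLIntegral_mono' hE
    intro x hx
    exact Finset.prod_le_prod' fun i _ =>
      ENNReal.rpow_le_rpow (hstepA x (hEQ hx) i) (hA i).le
  have hstepB : (∏ i, c i ^ A i) * v ≤
      2 * ∫⁻ x in E, ∏ i, HLM (Set.indicator R (σ i)) x ^ A i :=
    calc (∏ i, c i ^ A i) * v ≤ (∏ i, c i ^ A i) * (2 * volume E) :=
          mul_le_mul_right hvol _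
      _ = 2 * ((∏ i, c i ^ A i) * volume E) := by ring
      _ ≤ 2 * ∫⁻ x in E, ∏ i, HLM (Set.indicator R (σ i)) x ^ A i :=
          mul_le_mul_right h1 2
  have hC : ∏ i, setInt Qc (σ i) ^ A i = (∏ i, c i ^ A i) * v := by
    calc ∏ i, setInt Qc (σ i) ^ A i = ∏ i, (c i * v) ^ A i :=
          Finset.prod_congr rfl fun i _ => by
            rw [hcdef]; rw [ENNReal.div_mul_cancel hv.1 hv.2]
      _ = ∏ i, (c i ^ A i * v ^ A i) := Finset.prod_congr rfl fun i _ =>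
          ENNReal.mul_rpow_of_nonneg _ _ (hA i).le
      _ = (∏ i, c i ^ A i) * ∏ i, v ^ A i := Finset.prod_mul_distrib
      _ = (∏ i, c i ^ A i) * v := by
          rw [← aux_rpow_sum v A (fun i => (hA i).le), hA1, ENNReal.rpow_one]
  rw [hC]; exact hstepB

/-- The Carleson condition for `a_Q = ∏ σ_i(Q)^{p/p_i}` from the `W^∞_{⃗P}` constant. -/
theorem stmt17 {n m : ℕ} (hm : 0 < m) (p : Fin m → ℝ) (pp : ℝ)
    (hp : ∀ i, 1 < p i) (hpp : 1 / pp = ∑ i, 1 / p i)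
    (σ : Fin m → Rn n → ℝ) (hσ0 : ∀ i x, 0 ≤ σ i x) (hσm : ∀ i, Measurable (σ i))
    (W : ℝ≥0∞)
    (hW : ∀ Q : Set (Rn n), IsCube Q →
      (∫⁻ x in Q, ∏ i, HLM (Set.indicator Q (σ i)) x ^ (pp / p i)) ≤
        W * setInt Q fun x => ∏ i, σ i x ^ (pp / p i))
    (R : Set (Rn n)) (hR : IsDyadicCube R)
    {J : Type} (Q : ℤ → J → Set (Rn n))
    (hQd : ∀ k j, Q k j = ∅ ∨ IsDyadicCube (Q k j))
    (hQR : ∀ k j, Q k j ⊆ R)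
    (hsparse : IsSparse J Q) :
    (∑' kj : ℤ × J, ∏ i, setInt (Q kj.1 kj.2) (σ i) ^ (pp / p i)) ≤
      2 * W * setInt R fun x => ∏ i, σ i x ^ (pp / p i) := by
  classical
  have hppos : ∀ i, 0 < p i := fun i => lt_trans one_pos (hp i)
  have hsumpos : 0 < ∑ i, 1 / p i :=
    Finset.sum_pos (fun i _ => one_div_pos.mpr (hppos i))
      (Finset.univ_nonempty_iff.mpr (Fin.pos_iff_nonempty.mp hm))
  have hpp0 : 0 < pp := by
    have h0 : 0 < 1 / pp := hpp ▸ hsumpos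
    exact one_div_pos.mp h0
  set A : Fin m → ℝ := fun i => pp / p i with hAdef
  have hA : ∀ i, 0 < A i := fun i => div_pos hpp0 (hppos i)
  have hA1 : ∑ i, A i = 1 := by
    have hs : ∑ i, A i = pp * ∑ i, 1 / p i := by
      rw [Finset.mul_sum]
      exact Finset.sum_congr rfl fun i _ => by rw [mul_one_div]
    rw [hs, ← hpp, mul_one_div, div_self hpp0.ne']
  obtain ⟨kR, jR, hReq⟩ := hR
  have hRcube : IsCube R :=
    ⟨fun i => (jR i : ℝ) * (2:ℝ) ^ (-kR), (2:ℝ) ^ (-kR),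
      zpow_pos (by norm_num) _, by rw [hReq]; rfl⟩
  have hRvol : volume R ≠ ⊤ := (aux_dyadic_vol ⟨kR, jR, hReq⟩).2
  set E : ℤ × J → Set (Rn n) :=
    fun kj => Q kj.1 kj.2 \ ⋃ j', Q (kj.1 + 1) j' with hEdef
  have hUmeas : ∀ k, MeasurableSet (⋃ j, Q k j) := fun k => aux_iUnion_meas _ (hQd k)
  have hQmeas : ∀ k j, MeasurableSet (Q k j) := by
    intro k j; rcases hQd k j with h | h
    · rw [h]; exact MeasurableSet.empty
    · exact aux_dyadic_meas h
  have hEmeas : ∀ kj, MeasurableSet (E kj) := fun kj => (hQmeas _ _).diff (hUmeas _)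
  have hnest : ∀ k k' : ℤ, k ≤ k' → (⋃ j, Q k' j) ⊆ ⋃ j, Q k j := fun k k' hk =>
    Int.le_induction (motive := fun k'' _ => (⋃ j, Q k'' j) ⊆ ⋃ j, Q k j) subset_rfl
      (fun a _ ih => (hsparse.2.1 a).trans ih) k' hk
  have hdisj : ∀ a b : ℤ × J, a ≠ b → Disjoint (E a) (E b) := by
    have key : ∀ a b : ℤ × J, a.1 < b.1 → Disjoint (E a) (E b) := by
      intro a b hab
      apply Set.disjoint_left.mpr
      intro x hxa hxb
      exact hxa.2 (hnest _ _ (by omega) (Set.mem_iUnion.mpr ⟨b.2, hxb.1⟩))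
    intro a b hab
    rcases lt_trichotomy a.1 b.1 with h | h | h
    · exact key a b h
    · have hj : a.2 ≠ b.2 := fun hj2 => hab (Prod.ext h hj2)
      apply Set.disjoint_left.mpr
      intro x hxa hxb
      exact Set.eq_empty_iff_forall_notMem.mp (hsparse.1 a.1 a.2 b.2 hj) x
        ⟨hxa.1, by rw [h]; exact hxb.1⟩
    · exact (key b a h).symm
  have hvolE : ∀ k j, volume (Q k j) ≤ 2 * volume (E (k, j)) := by
    intro k j
    have hfin : volume (Q k j) ≠ ⊤ :=
      (lt_of_le_of_lt (measure_mono (hQR k j)) (lt_top_iff_ne_top.mpr hRvol)).ne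
    have h1 : volume (Q k j) ≤ volume (E (k, j)) + volume (Q k j) / 2 := by
      have hsub : Q k j ⊆ E (k, j) ∪ ((⋃ j', Q (k + 1) j') ∩ Q k j) := by
        intro x hx
        by_cases hxu : x ∈ ⋃ j', Q (k + 1) j'
        · exact Or.inr ⟨hxu, hx⟩
        · exact Or.inl ⟨hx, hxu⟩
      calc volume (Q k j) ≤ volume (E (k, j) ∪ ((⋃ j', Q (k + 1) j') ∩ Q k j)) :=
            measure_mono hsub
        _ ≤ volume (E (k, j)) + volume ((⋃ j', Q (k + 1) j') ∩ Q k j) :=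
            measure_union_le _ _
        _ ≤ volume (E (k, j)) + volume (Q k j) / 2 :=
            add_le_add_right (hsparse.2.2 k j) _
    have h2 : volume (Q k j) / 2 ≤ volume (E (k, j)) := by
      have hh : volume (Q k j) / 2 + volume (Q k j) / 2 ≤
          volume (E (k, j)) + volume (Q k j) / 2 := by
        rw [ENNReal.add_halves]; exact h1
      exact (ENNReal.add_le_add_iff_right
        (ENNReal.div_lt_top hfin (by norm_num)).ne).mp hh
    have h3 := (ENNReal.div_le_iff (by norm_num) (by norm_num)).mp h2
    calc volume (Q k j) ≤ volume (E (k, j)) * 2 := h3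
      _ = 2 * volume (E (k, j)) := mul_comm _ _
  set g : Rn n → ℝ≥0∞ := fun x => ∏ i, HLM (Set.indicator R (σ i)) x ^ A i with hgdef
  have hterm : ∀ kj : ℤ × J,
      (∏ i, setInt (Q kj.1 kj.2) (σ i) ^ A i) ≤ 2 * ∫⁻ x in E kj, g x := by
    intro kj
    rcases hQd kj.1 kj.2 with h | h
    · have h0 : setInt (Q kj.1 kj.2) (σ ⟨0, hm⟩) = 0 := by
        rw [h]; unfold setInt; simp
      rw [Finset.prod_eq_zero (Finset.mem_univ (⟨0, hm⟩ : Fin m))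
        (by rw [h0]; exact ENNReal.zero_rpow_of_pos (hA _))]
      exact zero_le
    · exact aux_percube A hA hA1 σ R _ h (hQR _ _) _ (hEmeas kj)
        Set.diff_subset (hvolE kj.1 kj.2)
  rw [ENNReal.tsum_eq_iSup_sum]
  apply iSup_le
  intro s
  calc ∑ kj ∈ s, ∏ i, setInt (Q kj.1 kj.2) (σ i) ^ A i
      ≤ ∑ kj ∈ s, 2 * ∫⁻ x in E kj, g x := Finset.sum_le_sum fun kj _ => hterm kj
    _ = 2 * ∑ kj ∈ s, ∫⁻ x in E kj, g x := by rw [Finset.mul_sum]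
    _ = 2 * ∫⁻ x in ⋃ kj ∈ s, E kj, g x := by
        rw [lintegral_biUnion_finset (fun a _ b _ hab => hdisj a b hab)
          (fun kj _ => hEmeas kj)]
    _ ≤ 2 * ∫⁻ x in R, g x := by
        apply mul_le_mul_right
        refine lintegral_mono' (Measure.restrict_mono ?_ le_rfl) le_rfl
        exact Set.iUnion₂_subset fun kj _ => Set.diff_subset.trans (hQR _ _)
    _ ≤ 2 * (W * setInt R fun x => ∏ i, σ i x ^ A i) :=
        mul_le_mul_right (hW R hRcube) _
    _ = 2 * W * setInt R fun x => ∏ i, σ i x ^ A i := (mul_assoc _ _ _).symm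
end
end
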